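/- arXiv:1701.07645 — 2 statements merged into one kernel-verified Lean document; each statement's English description precedes it below -/
import Mathlib

section
/- Let n ≥ 1 and let f : {0,1}^n → ℝ ∪ {+∞} be the quadratic function f(x) = Σ_{i∈[n]} h_i x_i + Σ_{1≤i<j≤n} h_{ij} x_i x_j, where h_i ∈ ℝ is finite for every i ∈ [n] and h_{ij} ∈ ℝ ∪ {+∞} with h_{ij} = h_{ji} for distinct i, j ∈ [n]. Then f is M♮-convex if and only if both of the following hold: (1) h_{ij} ≥ min{h_{ik}, h_{jk}} for all distinct i, j, k ∈ [n] (the anti-ultrametric property), and (2) h_{ij} ≥ 0 for all distinct i, j ∈ [n]. -/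
open Finset

/-- A function on `{0,1}^n` (identified with finite subsets of the index set) with values in
`ℝ ∪ {+∞}` is M♮-convex if for all `X, Y` and all `i ∈ supp⁺(X - Y) = X \ Y` there exists
`j ∈ supp⁺(Y - X) ∪ {0} = (Y \ X) ∪ {0}` (where `j = 0` means the zero vector) such that
`f(X) + f(Y) ≥ f(X - χ_i + χ_j) + f(Y + χ_i - χ_j)`. -/
def MnatConvex {ι : Type*} [DecidableEq ι] (f : Finset ι → WithTop ℝ) : Prop :=
  ∀ X Y : Finset ι, ∀ i ∈ X \ Y,
    (f (X.erase i) + f (insert i Y) ≤ f X + f Y) ∨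
    (∃ j ∈ Y \ X, f (insert j (X.erase i)) + f ((insert i Y).erase j) ≤ f X + f Y)

/-- The quadratic function `x ↦ Σ_{i ∈ [n]} h_i x_i + Σ_{1 ≤ i < j ≤ n} h_{ij} x_i x_j`
on `{0,1}^n`, a subset `S ⊆ [n]` encoding its indicator vector. -/
def quadF {n : ℕ} (h : Fin n → ℝ) (H : Fin n → Fin n → WithTop ℝ)
    (S : Finset (Fin n)) : WithTop ℝ :=
  (∑ i ∈ S, (h i : WithTop ℝ)) + ∑ p ∈ (S ×ˢ S).filter (fun p => p.1 < p.2), H p.1 p.2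


lemma sum_le_of_card_le {ι : Type*} [DecidableEq ι] :
    ∀ (N : ℕ) (F G : Finset ι) (u v : ι → WithTop ℝ), F.card = N →
      (∀ a ∈ F, 0 ≤ u a) → (∀ b ∈ G, 0 ≤ v b) →
      (∀ c : WithTop ℝ, 0 < c →
        (F.filter fun a => c ≤ u a).card ≤ (G.filter fun b => c ≤ v b).card) →
      (∑ a ∈ F, u a) ≤ ∑ b ∈ G, v b := by
  intro N
  induction N with
  | zero =>
      intro F G u v hF _ hv _
      rw [Finset.card_eq_zero] at hF
      subst hF
      simpa using Finset.sum_nonneg hv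
  | succ n ih =>
      intro F G u v hF hu hv hcount
      have hne : F.Nonempty := by
        rw [← Finset.card_pos, hF]; exact Nat.succ_pos n
      obtain ⟨a0, ha0, hmax⟩ := Finset.exists_max_image F u hne
      by_cases h0 : u a0 ≤ 0
      · have hz : ∀ a ∈ F, u a = 0 := fun a ha => le_antisymm ((hmax a ha).trans h0) (hu a ha)
        rw [Finset.sum_eq_zero hz]
        exact Finset.sum_nonneg hv
      · push_neg at h0
        have ha0f : a0 ∈ F.filter fun a => u a0 ≤ u a := by
          simp [Finset.mem_filter, ha0]
        have hGpos : 0 < (G.filter fun b => u a0 ≤ v b).card :=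
          lt_of_lt_of_le (Finset.card_pos.mpr ⟨a0, ha0f⟩) (hcount (u a0) h0)
        obtain ⟨b0, hb0f⟩ := Finset.card_pos.mp hGpos
        have hb0 : b0 ∈ G := (Finset.mem_filter.mp hb0f).1
        have hb0v : u a0 ≤ v b0 := (Finset.mem_filter.mp hb0f).2
        have hcard' : (F.erase a0).card = n := by
          rw [Finset.card_erase_of_mem ha0, hF]; rfl
        have hcount' : ∀ c : WithTop ℝ, 0 < c →
            ((F.erase a0).filter fun a => c ≤ u a).card ≤
              ((G.erase b0).filter fun b => c ≤ v b).card := by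
          intro c hcpos
          by_cases hc : c ≤ u a0
          · have hmemF : a0 ∈ F.filter fun a => c ≤ u a := by simp [Finset.mem_filter, ha0, hc]
            have hmemG : b0 ∈ G.filter fun b => c ≤ v b := by
              simp [Finset.mem_filter, hb0, hc.trans hb0v]
            rw [Finset.filter_erase, Finset.filter_erase,
              Finset.card_erase_of_mem hmemF, Finset.card_erase_of_mem hmemG]
            exact Nat.sub_le_sub_right (hcount c hcpos) 1
          · have hemp : (F.erase a0).filter (fun a => c ≤ u a) = ∅ := by
              rw [Finset.filter_eq_empty_iff]
              intro a ha hca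
              exact hc (hca.trans (hmax a (Finset.mem_of_mem_erase ha)))
            simp [hemp]
        have hrec := ih (F.erase a0) (G.erase b0) u v hcard'
          (fun a ha => hu a (Finset.mem_of_mem_erase ha))
          (fun b hb => hv b (Finset.mem_of_mem_erase hb)) hcount'
        calc (∑ a ∈ F, u a) = u a0 + ∑ a ∈ F.erase a0, u a := (Finset.add_sum_erase F u ha0).symm
          _ ≤ v b0 + ∑ b ∈ G.erase b0, v b := add_le_add hb0v hrec
          _ = ∑ b ∈ G, v b := Finset.add_sum_erase G v hb0


lemma lemE {ι : Type*} [DecidableEq ι] (s : ι → ι → WithTop ℝ)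
    (ssymm : ∀ x y, s x y = s y x)
    (au : ∀ x y z : ι, x ≠ y → y ≠ z → x ≠ z → min (s x z) (s z y) ≤ s x y)
    (P Q : Finset ι) (hdisj : Disjoint P Q) :
    ∀ (m : ℕ) (C : Finset ι) (θ : WithTop ℝ), C.card = m → C ⊆ P ∪ Q →
      (∀ x ∈ C, ∀ y ∈ C, x ≠ y → θ ≤ s x y) →
      (∀ x ∈ C, ∀ y ∈ P ∪ Q, y ∉ C → s x y ≤ θ) →
      (P ∩ C).card + 1 ≤ (Q ∩ C).card →
      ∃ j ∈ Q ∩ C, ∀ c : WithTop ℝ, θ < c →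
        (P.filter fun a => c ≤ s j a).card ≤ ((Q.erase j).filter fun b => c ≤ s j b).card := by
  intro m
  induction m using Nat.strong_induction_on with
  | _ m ih =>
  intro C θ hm hsub h1 h2 h3
  have hQCne : (Q ∩ C).Nonempty := by
    rw [← Finset.card_pos]; omega
  obtain ⟨q0, hq0⟩ := hQCne
  have hq0Q : q0 ∈ Q := (Finset.mem_inter.mp hq0).1
  have hq0C : q0 ∈ C := (Finset.mem_inter.mp hq0).2
  by_cases hPC : (P ∩ C).Nonempty
  · obtain ⟨p0, hp0⟩ := hPC
    have hp0P : p0 ∈ P := (Finset.mem_inter.mp hp0).1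
    have hp0C : p0 ∈ C := (Finset.mem_inter.mp hp0).2
    have hp0q0 : p0 ≠ q0 := fun he => (Finset.disjoint_left.mp hdisj hp0P) (he ▸ hq0Q)
    set pairs := (C ×ˢ C).filter (fun p => p.1 ≠ p.2) with hpairsdef
    have hpairsne : pairs.Nonempty := ⟨(p0, q0), by
      rw [hpairsdef, Finset.mem_filter, Finset.mem_product]
      exact ⟨⟨hp0C, hq0C⟩, hp0q0⟩⟩
    set μ := pairs.inf' hpairsne (fun p => s p.1 p.2) with hμdef
    have hμle : ∀ x ∈ C, ∀ y ∈ C, x ≠ y → μ ≤ s x y := by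
      intro x hx y hy hxy
      have hmem : (x, y) ∈ pairs := by
        rw [hpairsdef, Finset.mem_filter, Finset.mem_product]
        exact ⟨⟨hx, hy⟩, hxy⟩
      exact Finset.inf'_le _ hmem
    have hθμ : θ ≤ μ := by
      apply Finset.le_inf'
      intro p hp
      rw [hpairsdef, Finset.mem_filter, Finset.mem_product] at hp
      exact h1 _ hp.1.1 _ hp.1.2 hp.2
    have htrans : ∀ x y z : ι, μ < s x y → μ < s x z → z ≠ y → μ < s y z := by
      intro x y z hxy hxz hzy
      rcases eq_or_ne x y with rfl | hxy'
      · exact hxz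
      · rcases eq_or_ne x z with rfl | hxz'
        · rw [ssymm y x]; exact hxy
        · refine lt_of_lt_of_le (lt_min ?_ hxz) (au y z x hzy.symm hxz'.symm hxy'.symm)
          rw [ssymm y x]; exact hxy
    set t : ι → Finset ι := fun x => C.filter (fun y => y = x ∨ μ < s x y) with htdef
    have hmemt : ∀ x ∈ C, x ∈ t x := by
      intro x hx; simp [htdef, hx]
    have htsubC : ∀ x, t x ⊆ C := fun x => Finset.filter_subset _ _
    have hteq : ∀ x ∈ C, ∀ y ∈ t x, t x = t y := by
      intro x hx y hy
      simp only [htdef, Finset.mem_filter] at hy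
      obtain ⟨hyC, hy2⟩ := hy
      rcases eq_or_ne y x with rfl | hyx
      · rfl
      have hxy : μ < s x y := hy2.resolve_left hyx
      ext z
      simp only [htdef, Finset.mem_filter]
      constructor
      · rintro ⟨hzC, hz2⟩
        refine ⟨hzC, ?_⟩
        rcases eq_or_ne z y with rfl | hzy
        · exact Or.inl rfl
        rcases hz2 with rfl | hxz
        · exact Or.inr (by rw [ssymm y z]; exact hxy)
        · exact Or.inr (htrans x y z hxy hxz hzy)
      · rintro ⟨hzC, hz2⟩
        refine ⟨hzC, ?_⟩
        rcases eq_or_ne z x with rfl | hzx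
        · exact Or.inl rfl
        rcases hz2 with rfl | hyz
        · exact Or.inr hxy
        · exact Or.inr (htrans y x z (by rw [ssymm y x]; exact hxy) hyz hzx)
    -- surplus class exists
    have hsurplus : ∃ x0 ∈ C, (P ∩ t x0).card + 1 ≤ (Q ∩ t x0).card := by
      by_contra hcon
      push_neg at hcon
      have hcon' : ∀ x ∈ C, (Q ∩ t x).card ≤ (P ∩ t x).card := by
        intro x hx; have := hcon x hx; omega
      set R := C.image t with hRdef
      have hclassdisj : ∀ D1 ∈ R, ∀ D2 ∈ R, D1 ≠ D2 → Disjoint D1 D2 := by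
        intro D1 hD1 D2 hD2 hne
        rw [hRdef, Finset.mem_image] at hD1 hD2
        obtain ⟨x1, hx1, rfl⟩ := hD1
        obtain ⟨x2, hx2, rfl⟩ := hD2
        rw [Finset.disjoint_left]
        intro z hz1 hz2
        exact hne ((hteq x1 hx1 z hz1).trans (hteq x2 hx2 z hz2).symm)
      have hCeq : C = R.biUnion id := by
        ext z
        simp only [Finset.mem_biUnion, hRdef, Finset.mem_image, id]
        constructor
        · intro hz; exact ⟨t z, ⟨z, hz, rfl⟩, hmemt z hz⟩
        · rintro ⟨D, ⟨x, hx, rfl⟩, hzD⟩; exact htsubC x hzD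
      have hcards : ∀ S : Finset ι, (S ∩ C).card = ∑ D ∈ R, (S ∩ D).card := by
        intro S
        rw [hCeq, Finset.inter_comm, Finset.biUnion_inter, Finset.card_biUnion]
        · apply Finset.sum_congr rfl
          intro D _
          rw [Finset.inter_comm]
          rfl
        · intro D1 h1' D2 h2' hne
          exact Finset.disjoint_of_subset_left Finset.inter_subset_left
            (Finset.disjoint_of_subset_right Finset.inter_subset_left
              (hclassdisj D1 h1' D2 h2' hne))
      have : (Q ∩ C).card ≤ (P ∩ C).card := by
        rw [hcards Q, hcards P]
        apply Finset.sum_le_sum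
        intro D hD
        rw [hRdef, Finset.mem_image] at hD
        obtain ⟨x, hx, rfl⟩ := hD
        exact hcon' x hx
      omega
    obtain ⟨x0, hx0C, hsur⟩ := hsurplus
    have hDC : t x0 ⊆ C := htsubC x0
    -- t x0 is a proper subset of C
    obtain ⟨⟨u, v⟩, huv, hvalue⟩ := Finset.exists_mem_eq_inf' hpairsne (fun p => s p.1 p.2)
    rw [hpairsdef, Finset.mem_filter, Finset.mem_product] at huv
    obtain ⟨⟨huC, hvC⟩, huvne⟩ := huv
    have hnotboth : u ∉ t x0 ∨ v ∉ t x0 := by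
      by_contra hb
      push_neg at hb
      obtain ⟨huD, hvD⟩ := hb
      have heq : t x0 = t u := hteq x0 hx0C u huD
      have hvtu : v ∈ t u := by rw [← heq]; exact hvD
      simp only [htdef, Finset.mem_filter] at hvtu
      rcases hvtu.2 with rfl | hlt
      · exact huvne rfl
      · rw [← hvalue] at hlt; exact absurd hlt (lt_irrefl _)
    have hDlt : (t x0).card < C.card := by
      apply Finset.card_lt_card
      rw [Finset.ssubset_iff_of_subset hDC]
      rcases hnotboth with hu | hv
      · exact ⟨u, huC, hu⟩
      · exact ⟨v, hvC, hv⟩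
    -- recurse
    have hrec := ih (t x0).card (by omega) (t x0) μ rfl (hDC.trans hsub)
      (fun x hx y hy hxy => hμle x (hDC hx) y (hDC hy) hxy)
      ?_ hsur
    · obtain ⟨j, hjQD, hj⟩ := hrec
      have hjQ : j ∈ Q := (Finset.mem_inter.mp hjQD).1
      have hjD : j ∈ t x0 := (Finset.mem_inter.mp hjQD).2
      have hjC : j ∈ C := hDC hjD
      refine ⟨j, Finset.mem_inter.mpr ⟨hjQ, hjC⟩, ?_⟩
      intro c hc
      by_cases hcμ : c ≤ μ
      · -- middle range
        have hsubP : P.filter (fun a => c ≤ s j a) ⊆ P ∩ C := by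
          intro a ha
          rw [Finset.mem_filter] at ha
          obtain ⟨haP, hca⟩ := ha
          refine Finset.mem_inter.mpr ⟨haP, ?_⟩
          by_contra haC
          have := h2 j hjC a (Finset.mem_union_left _ haP) haC
          exact absurd (hca.trans this) (not_le.mpr hc)
        have hsubQ : (Q ∩ C).erase j ⊆ (Q.erase j).filter (fun b => c ≤ s j b) := by
          intro b hb
          rw [Finset.mem_erase, Finset.mem_inter] at hb
          obtain ⟨hbj, hbQ, hbC⟩ := hb
          rw [Finset.mem_filter, Finset.mem_erase]
          exact ⟨⟨hbj, hbQ⟩, hcμ.trans (hμle j hjC b hbC (fun he => hbj he.symm))⟩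
        calc (P.filter fun a => c ≤ s j a).card ≤ (P ∩ C).card := Finset.card_le_card hsubP
          _ ≤ (Q ∩ C).card - 1 := by omega
          _ = ((Q ∩ C).erase j).card := by
              rw [Finset.card_erase_of_mem (Finset.mem_inter.mpr ⟨hjQ, hjC⟩)]
          _ ≤ _ := Finset.card_le_card hsubQ
      · exact hj c (not_le.mp hcμ)
    · -- h2 for t x0 with threshold μ
      intro x hx y hy hyD
      by_cases hyC : y ∈ C
      · by_contra hgt
        push_neg at hgt
        have hxy : x ≠ y := fun he => hyD (he ▸ hx)
        have hytx : y ∈ t x := by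
          simp only [htdef, Finset.mem_filter]
          exact ⟨hyC, Or.inr hgt⟩
        have heq : t x0 = t x := hteq x0 hx0C x hx
        exact hyD (by rw [heq]; exact hytx)
      · exact (h2 x (hDC hx) y hy hyC).trans hθμ
  · -- P ∩ C empty
    refine ⟨q0, hq0, ?_⟩
    intro c hc
    have hemp : P.filter (fun a => c ≤ s q0 a) = ∅ := by
      rw [Finset.filter_eq_empty_iff]
      intro a haP hca
      by_cases haC : a ∈ C
      · exact hPC ⟨a, Finset.mem_inter.mpr ⟨haP, haC⟩⟩
      · exact absurd (hca.trans (h2 q0 hq0C a (Finset.mem_union_left _ haP) haC))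
          (not_le.mpr hc)
    simp [hemp]


lemma pairSum_eq {n : ℕ} (H : Fin n → Fin n → WithTop ℝ) (T : Finset (Fin n)) :
    ∑ p ∈ (T ×ˢ T).filter (fun p => p.1 < p.2), H p.1 p.2
      = ∑ x ∈ T, ∑ y ∈ T, if x < y then H x y else 0 := by
  rw [Finset.sum_filter, Finset.sum_product]



lemma quadF_insert {n : ℕ} (h : Fin n → ℝ) (H : Fin n → Fin n → WithTop ℝ)
    (Hsymm : ∀ i j : Fin n, H i j = H j i) {S : Finset (Fin n)} {i : Fin n} (hi : i ∉ S) :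
    quadF h H (insert i S) = quadF h H S + (h i : WithTop ℝ) + ∑ a ∈ S, H i a := by
  unfold quadF
  rw [pairSum_eq, pairSum_eq, Finset.sum_insert hi]
  rw [Finset.sum_insert hi]
  have hdiag : (if i < i then H i i else 0) = 0 := by simp
  have hsplit : ∀ x ∈ S, (∑ y ∈ insert i S, if x < y then H x y else 0)
      = (if x < i then H x i else 0) + ∑ y ∈ S, if x < y then H x y else 0 := by
    intro x _
    rw [Finset.sum_insert hi]
  rw [Finset.sum_congr rfl hsplit, Finset.sum_add_distrib, Finset.sum_insert hi, hdiag]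
  have hkey : (∑ y ∈ S, if i < y then H i y else 0) + ∑ x ∈ S, (if x < i then H x i else 0)
      = ∑ a ∈ S, H i a := by
    rw [← Finset.sum_add_distrib]
    apply Finset.sum_congr rfl
    intro a ha
    have hai : a ≠ i := fun he => hi (he ▸ ha)
    rcases lt_or_gt_of_ne hai with hlt | hgt
    · simp [hlt, not_lt.mpr hlt.le, Hsymm a i]
    · simp [hgt, not_lt.mpr hgt.le]
  -- now pure rearrangement
  calc (↑(h i) + ∑ x ∈ S, ↑(h x)) + (0 + (∑ y ∈ S, if i < y then H i y else 0) +
        ((∑ x ∈ S, if x < i then H x i else 0) + ∑ x ∈ S, ∑ y ∈ S, if x < y then H x y else 0))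
      = ((∑ x ∈ S, ↑(h x)) + ∑ x ∈ S, ∑ y ∈ S, if x < y then H x y else 0) + ↑(h i) +
        ((∑ y ∈ S, if i < y then H i y else 0) + ∑ x ∈ S, (if x < i then H x i else 0)) := by
        abel
    _ = _ := by rw [hkey]


lemma filterProdSingleton {α : Type*} [DecidableEq α] (S : Finset α) (b : Bool)
    (p : α × Bool → Prop) [DecidablePred p] :
    ((S ×ˢ ({b} : Finset Bool)).filter p).card = (S.filter (fun a => p (a, b))).card := by
  have he : (S ×ˢ ({b} : Finset Bool)).filter p = (S.filter (fun a => p (a, b))) ×ˢ {b} := by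
    ext ⟨x, y⟩
    simp only [Finset.mem_filter, Finset.mem_product, Finset.mem_singleton]
    constructor
    · rintro ⟨⟨hx, rfl⟩, hp⟩; exact ⟨⟨hx, hp⟩, rfl⟩
    · rintro ⟨⟨hx, hp⟩, rfl⟩; exact ⟨⟨hx, rfl⟩, hp⟩
  rw [he, Finset.card_product, Finset.card_singleton, mul_one]



lemma necessityAux (n : ℕ) (h : Fin n → ℝ) (H : Fin n → Fin n → WithTop ℝ)
    (Hsymm : ∀ i j : Fin n, H i j = H j i) (M : MnatConvex (quadF h H)) :
    ((∀ i j k : Fin n, i ≠ j → j ≠ k → i ≠ k → min (H i k) (H j k) ≤ H i j) ∧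
       (∀ i j : Fin n, i ≠ j → 0 ≤ H i j)) := by
  have e0 : quadF h H ∅ = 0 := by unfold quadF; simp
  have e1 : ∀ a : Fin n, quadF h H {a} = (h a : WithTop ℝ) := by
    intro a
    rw [show ({a} : Finset (Fin n)) = insert a ∅ from rfl,
      quadF_insert h H Hsymm (Finset.notMem_empty a), e0]
    simp
  have e2 : ∀ a b : Fin n, a ≠ b → quadF h H {a, b} = (h b : WithTop ℝ) + h a + H a b := by
    intro a b hab
    rw [show ({a, b} : Finset (Fin n)) = insert a {b} from rfl,
      quadF_insert h H Hsymm (by simp [hab]), e1 b]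
    simp
  constructor
  · intro i j k hij hjk hik
    have hM := M (insert i {j}) {k} i (by
      rw [Finset.mem_sdiff]
      exact ⟨Finset.mem_insert_self i {j}, by simp [hik]⟩)
    rw [Finset.erase_insert (by simp [hij])] at hM
    rcases hM with h0 | ⟨j', hj', hineq⟩
    · -- h0 : f {j} + f (insert i {k}) ≤ f {i,j} + f {k}
      rw [e1 j, show insert i ({k} : Finset (Fin n)) = {i, k} from rfl, e2 i k hik,
        e2 i j hij, e1 k] at h0
      have h0' : ((h j + h k + h i : ℝ) : WithTop ℝ) + H i k
          ≤ ((h j + h k + h i : ℝ) : WithTop ℝ) + H i j := by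
        calc ((h j + h k + h i : ℝ) : WithTop ℝ) + H i k
            = (h j : WithTop ℝ) + ((h k : WithTop ℝ) + h i + H i k) := by push_cast; abel
          _ ≤ (h j : WithTop ℝ) + (h i : WithTop ℝ) + H i j + (h k : WithTop ℝ) := h0
          _ = ((h j + h k + h i : ℝ) : WithTop ℝ) + H i j := by push_cast; abel
      have := (WithTop.add_le_add_iff_left (WithTop.coe_ne_top)).mp h0'
      exact le_trans (min_le_left _ _) this
    · have hj'k : j' = k := by
        rw [Finset.mem_sdiff, Finset.mem_singleton] at hj'
        exact hj'.1
      subst hj'k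
      rw [show insert j' ({j} : Finset (Fin n)) = {j', j} from rfl, e2 j' j hjk.symm,
        Finset.erase_insert_of_ne hik, Finset.erase_singleton,
        show insert i (∅ : Finset (Fin n)) = {i} from rfl, e1 i,
        e2 i j hij, e1 j'] at hineq
      have h0' : ((h j + h j' + h i : ℝ) : WithTop ℝ) + H j' j
          ≤ ((h j + h j' + h i : ℝ) : WithTop ℝ) + H i j := by
        calc ((h j + h j' + h i : ℝ) : WithTop ℝ) + H j' j
            = (h j : WithTop ℝ) + (h j' : WithTop ℝ) + H j' j + (h i : WithTop ℝ) := by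
              push_cast; abel
          _ ≤ (h j : WithTop ℝ) + (h i : WithTop ℝ) + H i j + (h j' : WithTop ℝ) := hineq
          _ = ((h j + h j' + h i : ℝ) : WithTop ℝ) + H i j := by push_cast; abel
      have := (WithTop.add_le_add_iff_left (WithTop.coe_ne_top)).mp h0'
      rw [Hsymm j' j] at this
      exact le_trans (min_le_right _ _) this
  · intro i j hij
    have hM := M (insert i {j}) ∅ i (by
      rw [Finset.mem_sdiff]
      exact ⟨Finset.mem_insert_self i {j}, Finset.notMem_empty i⟩)
    rw [Finset.erase_insert (by simp [hij])] at hM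
    rcases hM with h0 | ⟨j', hj', _⟩
    · rw [e1 j, show insert i (∅ : Finset (Fin n)) = {i} from rfl, e1 i,
        e2 i j hij, e0, add_zero] at h0
      have h0' : ((h j + h i : ℝ) : WithTop ℝ) + 0
          ≤ ((h j + h i : ℝ) : WithTop ℝ) + H i j := by
        calc ((h j + h i : ℝ) : WithTop ℝ) + 0
            = (h j : WithTop ℝ) + (h i : WithTop ℝ) := by push_cast; abel
          _ ≤ (h j : WithTop ℝ) + (h i : WithTop ℝ) + H i j := h0
          _ = ((h j + h i : ℝ) : WithTop ℝ) + H i j := by push_cast; rfl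
      exact (WithTop.add_le_add_iff_left (WithTop.coe_ne_top)).mp h0'
    · simp at hj'


lemma sufficiencyAux (n : ℕ) (h : Fin n → ℝ) (H : Fin n → Fin n → WithTop ℝ)
    (Hsymm : ∀ i j : Fin n, H i j = H j i)
    (hau : ∀ i j k : Fin n, i ≠ j → j ≠ k → i ≠ k → min (H i k) (H j k) ≤ H i j)
    (hnn : ∀ i j : Fin n, i ≠ j → 0 ≤ H i j) : MnatConvex (quadF h H) := by
  have au' : ∀ x y z : Fin n, x ≠ y → y ≠ z → x ≠ z → min (H x z) (H z y) ≤ H x y := by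
    intro x y z a b c; rw [Hsymm z y]; exact hau x y z a b c
  intro X Y i hiXY
  rw [Finset.mem_sdiff] at hiXY
  obtain ⟨hiX, hiY⟩ := hiXY
  have fX : quadF h H X = quadF h H (X.erase i) + (h i : WithTop ℝ) + ∑ a ∈ X.erase i, H i a := by
    conv_lhs => rw [← Finset.insert_erase hiX]
    exact quadF_insert h H Hsymm (Finset.notMem_erase i X)
  by_cases h0 : (∑ b ∈ Y, H i b) ≤ ∑ a ∈ X.erase i, H i a
  · left
    have fY : quadF h H (insert i Y) = quadF h H Y + (h i : WithTop ℝ) + ∑ b ∈ Y, H i b :=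
      quadF_insert h H Hsymm hiY
    rw [fX, fY]
    calc quadF h H (X.erase i) + (quadF h H Y + (h i : WithTop ℝ) + ∑ b ∈ Y, H i b)
        = (quadF h H (X.erase i) + quadF h H Y + (h i : WithTop ℝ)) + ∑ b ∈ Y, H i b := by abel
      _ ≤ (quadF h H (X.erase i) + quadF h H Y + (h i : WithTop ℝ)) + ∑ a ∈ X.erase i, H i a :=
          add_le_add_right h0 _
      _ = quadF h H (X.erase i) + (h i : WithTop ℝ) + (∑ a ∈ X.erase i, H i a) + quadF h H Y := by
          abel
  · right
    have hnnY : ∀ b ∈ Y, (0:WithTop ℝ) ≤ H i b := fun b hb => hnn i b (fun he => hiY (he ▸ hb))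
    have hnnX : ∀ a ∈ X.erase i, (0:WithTop ℝ) ≤ H i a := fun a ha =>
      hnn i a (Ne.symm (Finset.ne_of_mem_erase ha))
    -- constructing tstar
    set T := (Y.image (H i)).filter (fun c =>
      ((X.erase i).filter (fun a => c ≤ H i a)).card < (Y.filter (fun b => c ≤ H i b)).card)
      with hTdef
    have hkey : ∀ c : WithTop ℝ,
        ((X.erase i).filter (fun a => c ≤ H i a)).card < (Y.filter (fun b => c ≤ H i b)).card →
        ∃ t ∈ T, c ≤ t := by
      intro c hc
      have hBne : (Y.filter (fun b => c ≤ H i b)).Nonempty := by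
        rw [← Finset.card_pos]; omega
      set t0 := (Y.filter (fun b => c ≤ H i b)).inf' hBne (H i) with ht0def
      have hct0 : c ≤ t0 := by
        apply Finset.le_inf'
        intro b hb; exact (Finset.mem_filter.mp hb).2
      have hfeq : Y.filter (fun b => t0 ≤ H i b) = Y.filter (fun b => c ≤ H i b) := by
        ext b
        simp only [Finset.mem_filter]
        constructor
        · rintro ⟨hbY, hb⟩; exact ⟨hbY, hct0.trans hb⟩
        · rintro ⟨hbY, hb⟩
          exact ⟨hbY, Finset.inf'_le _ (Finset.mem_filter.mpr ⟨hbY, hb⟩)⟩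
      have hXsub : (X.erase i).filter (fun a => t0 ≤ H i a)
          ⊆ (X.erase i).filter (fun a => c ≤ H i a) := by
        intro a ha
        rw [Finset.mem_filter] at ha ⊢
        exact ⟨ha.1, hct0.trans ha.2⟩
      obtain ⟨b0, hb0, hb0v⟩ := Finset.exists_mem_eq_inf' hBne (H i)
      have hT : t0 ∈ T := by
        rw [hTdef, Finset.mem_filter]
        constructor
        · rw [Finset.mem_image]
          exact ⟨b0, (Finset.mem_filter.mp hb0).1, hb0v.symm⟩
        · calc ((X.erase i).filter (fun a => t0 ≤ H i a)).card
              ≤ ((X.erase i).filter (fun a => c ≤ H i a)).card := Finset.card_le_card hXsub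
            _ < (Y.filter (fun b => c ≤ H i b)).card := hc
            _ = (Y.filter (fun b => t0 ≤ H i b)).card := by rw [hfeq]
      exact ⟨t0, hT, hct0⟩
    have hex : ∃ c : WithTop ℝ, 0 < c ∧
        ((X.erase i).filter (fun a => c ≤ H i a)).card < (Y.filter (fun b => c ≤ H i b)).card := by
      by_contra hno
      push_neg at hno
      exact h0 (sum_le_of_card_le Y.card Y (X.erase i) (H i) (H i) rfl hnnY hnnX
        (fun c hc => hno c hc))
    obtain ⟨c0, hc0pos, hc0⟩ := hex
    obtain ⟨t1, hT1, _⟩ := hkey c0 hc0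
    have hTne : T.Nonempty := ⟨t1, hT1⟩
    set tstar := T.max' hTne with htsdef
    have hsurstar : ((X.erase i).filter (fun a => tstar ≤ H i a)).card
        < (Y.filter (fun b => tstar ≤ H i b)).card := by
      exact (Finset.mem_filter.mp (T.max'_mem hTne)).2
    have hmaxprop : ∀ c : WithTop ℝ, tstar < c →
        (Y.filter (fun b => c ≤ H i b)).card ≤ ((X.erase i).filter (fun a => c ≤ H i a)).card := by
      intro c hc
      by_contra hlt
      push_neg at hlt
      obtain ⟨t, htT, hct⟩ := hkey c hlt
      exact absurd (hct.trans (T.le_max' t htT)) (not_le.mpr hc)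
    -- sets
    set P := (X.erase i) \ Y with hPdef
    set Q := Y \ X with hQdef
    set O := Y ∩ X with hOdef
    have hPQdisj : Disjoint P Q := by
      rw [Finset.disjoint_left]
      intro a haP haQ
      rw [hPdef, Finset.mem_sdiff, Finset.mem_erase] at haP
      rw [hQdef, Finset.mem_sdiff] at haQ
      exact haQ.2 haP.1.2
    have hXsplit : P ∪ O = X.erase i := by
      have h1 : (X.erase i) ∩ Y = O := by
        ext a
        rw [hOdef, Finset.mem_inter, Finset.mem_inter, Finset.mem_erase]
        constructor
        · rintro ⟨⟨_, hX⟩, hY⟩; exact ⟨hY, hX⟩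
        · rintro ⟨hY, hX⟩; exact ⟨⟨fun he => hiY (he ▸ hY), hX⟩, hY⟩
      rw [← h1, hPdef]
      exact Finset.sdiff_union_inter _ _
    have hYsplit : Q ∪ O = Y := Finset.sdiff_union_inter Y X
    have hPOdisj : Disjoint P O := by
      rw [Finset.disjoint_left]
      intro a haP haO
      rw [hPdef, Finset.mem_sdiff] at haP
      rw [hOdef, Finset.mem_inter] at haO
      exact haP.2 haO.1
    have hQOdisj : Disjoint Q O := by
      rw [Finset.disjoint_left]
      intro a haQ haO
      rw [hQdef, Finset.mem_sdiff] at haQ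
      rw [hOdef, Finset.mem_inter] at haO
      exact haQ.2 haO.2
    have hcount_union : ∀ (A B : Finset (Fin n)) (hD : Disjoint A B) (p : Fin n → Prop)
        (_ : DecidablePred p), True := fun _ _ _ _ _ => trivial
    have hniPQ : ∀ x ∈ P ∪ Q, x ≠ i := by
      intro x hx
      rw [Finset.mem_union] at hx
      rcases hx with hx | hx
      · rw [hPdef, Finset.mem_sdiff, Finset.mem_erase] at hx
        exact hx.1.1
      · rw [hQdef, Finset.mem_sdiff] at hx
        exact fun he => hx.2 (he ▸ hiX)
    set C := (P ∪ Q).filter (fun x => tstar ≤ H i x) with hCdef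
    have hCsub : C ⊆ P ∪ Q := Finset.filter_subset _ _
    have hCmem : ∀ x ∈ C, tstar ≤ H i x := by
      intro x hx
      rw [hCdef, Finset.mem_filter] at hx
      exact hx.2
    have hC1 : ∀ x ∈ C, ∀ y ∈ C, x ≠ y → tstar ≤ H x y := by
      intro x hx y hy hxy
      have hxi : x ≠ i := hniPQ x (hCsub hx)
      have hyi : y ≠ i := hniPQ y (hCsub hy)
      refine le_trans (le_min ?_ (hCmem y hy)) (au' x y i hxy hyi hxi)
      rw [Hsymm x i]
      exact hCmem x hx
    have hC2 : ∀ x ∈ C, ∀ y ∈ P ∪ Q, y ∉ C → H x y ≤ tstar := by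
      intro x hx y hy hyC
      have hyn : ¬ tstar ≤ H i y := by
        intro hts
        exact hyC (by rw [hCdef, Finset.mem_filter]; exact ⟨hy, hts⟩)
      by_contra hgt
      push_neg at hgt
      have hxi : x ≠ i := hniPQ x (hCsub hx)
      have hyi : y ≠ i := hniPQ y hy
      have hxy : x ≠ y := fun he => hyC (he ▸ hx)
      have := au' i y x hyi.symm hxy.symm hxi.symm
      have : tstar ≤ H i y :=
        le_trans (le_min (hCmem x hx) hgt.le) this
      exact hyn this
    -- surplus in C
    have hsplitcount : ∀ (c : WithTop ℝ),
        ((X.erase i).filter (fun a => c ≤ H i a)).card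
          = (P.filter (fun a => c ≤ H i a)).card + (O.filter (fun a => c ≤ H i a)).card ∧
        (Y.filter (fun b => c ≤ H i b)).card
          = (Q.filter (fun b => c ≤ H i b)).card + (O.filter (fun b => c ≤ H i b)).card := by
      intro c
      constructor
      · rw [← hXsplit, Finset.filter_union,
          Finset.card_union_of_disjoint (Finset.disjoint_filter_filter hPOdisj)]
      · rw [← hYsplit, Finset.filter_union,
          Finset.card_union_of_disjoint (Finset.disjoint_filter_filter hQOdisj)]
    have hC3 : (P ∩ C).card + 1 ≤ (Q ∩ C).card := by
      have hPC : P ∩ C = P.filter (fun x => tstar ≤ H i x) := by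
        ext a
        rw [hCdef, Finset.mem_inter, Finset.mem_filter, Finset.mem_filter, Finset.mem_union]
        constructor
        · rintro ⟨haP, _, hts⟩; exact ⟨haP, hts⟩
        · rintro ⟨haP, hts⟩; exact ⟨haP, Or.inl haP, hts⟩
      have hQC : Q ∩ C = Q.filter (fun x => tstar ≤ H i x) := by
        ext a
        rw [hCdef, Finset.mem_inter, Finset.mem_filter, Finset.mem_filter, Finset.mem_union]
        constructor
        · rintro ⟨haQ, _, hts⟩; exact ⟨haQ, hts⟩
        · rintro ⟨haQ, hts⟩; exact ⟨haQ, Or.inr haQ, hts⟩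
      obtain ⟨hx1, hy1⟩ := hsplitcount tstar
      rw [hPC, hQC]
      omega
    obtain ⟨j, hjQC, hjcount⟩ := lemE H Hsymm au' P Q hPQdisj C.card C tstar rfl hCsub hC1 hC2 hC3
    have hjQ : j ∈ Q := (Finset.mem_inter.mp hjQC).1
    have hjC : j ∈ C := (Finset.mem_inter.mp hjQC).2
    have hjY : j ∈ Y := by
      rw [hQdef, Finset.mem_sdiff] at hjQ; exact hjQ.1
    have hjnX : j ∉ X := by
      rw [hQdef, Finset.mem_sdiff] at hjQ; exact hjQ.2
    have hij : i ≠ j := fun he => hjnX (he ▸ hiX)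
    have htsij : tstar ≤ H i j := hCmem j hjC
    -- the combined count inequality
    have hcounts : ∀ c : WithTop ℝ, 0 < c →
        ((X.erase i).filter (fun a => c ≤ H j a)).card
          + ((Y.erase j).filter (fun b => c ≤ H i b)).card
        ≤ ((X.erase i).filter (fun a => c ≤ H i a)).card
          + ((Y.erase j).filter (fun b => c ≤ H j b)).card := by
      intro c hc
      by_cases hcij : c ≤ H i j
      · have hXeq : (X.erase i).filter (fun a => c ≤ H j a)
            = (X.erase i).filter (fun a => c ≤ H i a) := by
          ext a
          rw [Finset.mem_filter, Finset.mem_filter]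
          constructor
          · rintro ⟨ha, hca⟩
            have hai : a ≠ i := Finset.ne_of_mem_erase ha
            have haj : a ≠ j := fun he => hjnX (he ▸ Finset.mem_of_mem_erase ha)
            refine ⟨ha, le_trans (le_min hcij hca) (au' i a j hai.symm haj hij)⟩
          · rintro ⟨ha, hca⟩
            have hai : a ≠ i := Finset.ne_of_mem_erase ha
            have haj : a ≠ j := fun he => hjnX (he ▸ Finset.mem_of_mem_erase ha)
            refine ⟨ha, le_trans (le_min ?_ hca) (au' j a i haj.symm hai hij.symm)⟩
            rw [Hsymm j i]; exact hcij
        have hYeq : (Y.erase j).filter (fun b => c ≤ H i b)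
            = (Y.erase j).filter (fun b => c ≤ H j b) := by
          ext b
          rw [Finset.mem_filter, Finset.mem_filter]
          constructor
          · rintro ⟨hb, hcb⟩
            have hbj : b ≠ j := Finset.ne_of_mem_erase hb
            have hbi : b ≠ i := fun he => hiY (he ▸ Finset.mem_of_mem_erase hb)
            refine ⟨hb, le_trans (le_min ?_ hcb) (au' j b i hbj.symm hbi hij.symm)⟩
            rw [Hsymm j i]; exact hcij
          · rintro ⟨hb, hcb⟩
            have hbj : b ≠ j := Finset.ne_of_mem_erase hb
            have hbi : b ≠ i := fun he => hiY (he ▸ Finset.mem_of_mem_erase hb)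
            exact ⟨hb, le_trans (le_min hcij hcb) (au' i b j hbi.symm hbj hij)⟩
        rw [hXeq, hYeq]
      · push_neg at hcij
        have hc1 : ((Y.erase j).filter (fun b => c ≤ H i b)).card
            ≤ ((X.erase i).filter (fun a => c ≤ H i a)).card := by
          calc ((Y.erase j).filter (fun b => c ≤ H i b)).card
              ≤ (Y.filter (fun b => c ≤ H i b)).card :=
                Finset.card_le_card (Finset.monotone_filter_left _ (Finset.erase_subset _ _))
            _ ≤ _ := hmaxprop c (lt_of_le_of_lt htsij hcij)
        have hc2 : ((X.erase i).filter (fun a => c ≤ H j a)).card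
            ≤ ((Y.erase j).filter (fun b => c ≤ H j b)).card := by
          have e1 : ((X.erase i).filter (fun a => c ≤ H j a)).card
              = (P.filter (fun a => c ≤ H j a)).card + (O.filter (fun a => c ≤ H j a)).card := by
            rw [← hXsplit, Finset.filter_union,
              Finset.card_union_of_disjoint (Finset.disjoint_filter_filter hPOdisj)]
          have hYejsplit : (Q.erase j) ∪ O = Y.erase j := by
            have hjO : j ∉ O := by
              rw [hOdef, Finset.mem_inter]
              exact fun hm => hjnX hm.2
            rw [← hYsplit, Finset.erase_union_distrib, Finset.erase_eq_of_notMem hjO]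
          have e2 : ((Y.erase j).filter (fun b => c ≤ H j b)).card
              = ((Q.erase j).filter (fun b => c ≤ H j b)).card
                + (O.filter (fun b => c ≤ H j b)).card := by
            rw [← hYejsplit, Finset.filter_union,
              Finset.card_union_of_disjoint (Finset.disjoint_filter_filter
                (Finset.disjoint_of_subset_left (Finset.erase_subset _ _) hQOdisj))]
          have hlem := hjcount c (lt_of_le_of_lt htsij hcij)
          omega
        omega
    -- combined sums via product with Bool
    have hdisjFb : Disjoint ((X.erase i) ×ˢ ({false} : Finset Bool))
        ((Y.erase j) ×ˢ ({true} : Finset Bool)) := by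
      rw [Finset.disjoint_left]
      rintro ⟨a, b⟩ h1 h2
      rw [Finset.mem_product, Finset.mem_singleton] at h1 h2
      rw [h1.2] at h2
      exact Bool.false_ne_true h2.2
    set Fb := ((X.erase i) ×ˢ ({false} : Finset Bool)) ∪ ((Y.erase j) ×ˢ ({true} : Finset Bool))
      with hFbdef
    set uu : Fin n × Bool → WithTop ℝ := fun p => if p.2 then H i p.1 else H j p.1 with huudef
    set vv : Fin n × Bool → WithTop ℝ := fun p => if p.2 then H j p.1 else H i p.1 with hvvdef
    have hsum : ∀ w : Fin n × Bool → WithTop ℝ,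
        ∑ p ∈ Fb, w p = (∑ a ∈ X.erase i, w (a, false)) + ∑ b ∈ Y.erase j, w (b, true) := by
      intro w
      rw [hFbdef, Finset.sum_union hdisjFb, Finset.sum_product, Finset.sum_product]
      simp
    have hcardFb : ∀ (w : Fin n × Bool → WithTop ℝ) (c : WithTop ℝ),
        (Fb.filter (fun p => c ≤ w p)).card
          = ((X.erase i).filter (fun a => c ≤ w (a, false))).card
            + ((Y.erase j).filter (fun b => c ≤ w (b, true))).card := by
      intro w c
      rw [hFbdef, Finset.filter_union,
        Finset.card_union_of_disjoint (Finset.disjoint_filter_filter hdisjFb),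
        filterProdSingleton, filterProdSingleton]
    have hnnu : ∀ p ∈ Fb, (0:WithTop ℝ) ≤ uu p := by
      rintro ⟨a, b⟩ hp
      rw [hFbdef, Finset.mem_union, Finset.mem_product, Finset.mem_product,
        Finset.mem_singleton, Finset.mem_singleton] at hp
      rcases hp with ⟨ha, rfl⟩ | ⟨ha, rfl⟩
      · simp only [huudef, if_neg Bool.false_ne_true]
        exact hnn j a (fun he => hjnX (he ▸ Finset.mem_of_mem_erase ha))
      · simp only [huudef, if_pos rfl]
        exact hnn i a (fun he => hiY (he ▸ Finset.mem_of_mem_erase ha))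
    have hnnv : ∀ p ∈ Fb, (0:WithTop ℝ) ≤ vv p := by
      rintro ⟨a, b⟩ hp
      rw [hFbdef, Finset.mem_union, Finset.mem_product, Finset.mem_product,
        Finset.mem_singleton, Finset.mem_singleton] at hp
      rcases hp with ⟨ha, rfl⟩ | ⟨ha, rfl⟩
      · simp only [hvvdef, if_neg Bool.false_ne_true]
        exact hnn i a (Ne.symm (Finset.ne_of_mem_erase ha))
      · simp only [hvvdef, if_pos rfl]
        exact hnn j a (Ne.symm (Finset.ne_of_mem_erase ha))
    have core : (∑ a ∈ X.erase i, H j a) + ∑ b ∈ Y.erase j, H i b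
        ≤ (∑ a ∈ X.erase i, H i a) + ∑ b ∈ Y.erase j, H j b := by
      have := sum_le_of_card_le Fb.card Fb Fb uu vv rfl hnnu hnnv (by
        intro c hc
        rw [hcardFb uu c, hcardFb vv c]
        simpa [huudef, hvvdef] using hcounts c hc)
      rw [hsum uu, hsum vv] at this
      simpa [huudef, hvvdef] using this
    -- conclude
    refine ⟨j, Finset.mem_sdiff.mpr ⟨hjY, hjnX⟩, ?_⟩
    have fY : quadF h H Y = quadF h H (Y.erase j) + (h j : WithTop ℝ) + ∑ b ∈ Y.erase j, H j b := by
      conv_lhs => rw [← Finset.insert_erase hjY]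
      exact quadF_insert h H Hsymm (Finset.notMem_erase j Y)
    have fXj : quadF h H (insert j (X.erase i))
        = quadF h H (X.erase i) + (h j : WithTop ℝ) + ∑ a ∈ X.erase i, H j a :=
      quadF_insert h H Hsymm (fun hm => hjnX (Finset.mem_of_mem_erase hm))
    have fYi : quadF h H ((insert i Y).erase j)
        = quadF h H (Y.erase j) + (h i : WithTop ℝ) + ∑ b ∈ Y.erase j, H i b := by
      rw [Finset.erase_insert_of_ne hij]
      exact quadF_insert h H Hsymm (fun hm => hiY (Finset.mem_of_mem_erase hm))
    rw [fXj, fYi, fX, fY]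
    calc quadF h H (X.erase i) + (h j : WithTop ℝ) + (∑ a ∈ X.erase i, H j a)
          + (quadF h H (Y.erase j) + (h i : WithTop ℝ) + ∑ b ∈ Y.erase j, H i b)
        = (quadF h H (X.erase i) + quadF h H (Y.erase j) + (h i : WithTop ℝ) + (h j : WithTop ℝ))
          + ((∑ a ∈ X.erase i, H j a) + ∑ b ∈ Y.erase j, H i b) := by abel
      _ ≤ (quadF h H (X.erase i) + quadF h H (Y.erase j) + (h i : WithTop ℝ) + (h j : WithTop ℝ))
          + ((∑ a ∈ X.erase i, H i a) + ∑ b ∈ Y.erase j, H j b) := add_le_add_right core _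
      _ = quadF h H (X.erase i) + (h i : WithTop ℝ) + (∑ a ∈ X.erase i, H i a)
          + (quadF h H (Y.erase j) + (h j : WithTop ℝ) + ∑ b ∈ Y.erase j, H j b) := by abel


/-- A quadratic function on `{0,1}^n` with finite linear coefficients `h_i` and symmetric
quadratic coefficients `h_{ij} ∈ ℝ ∪ {+∞}` is M♮-convex iff `h_{ij} ≥ min{h_{ik}, h_{jk}}`
for all distinct `i, j, k` (anti-ultrametric property) and `h_{ij} ≥ 0` for all distinct
`i, j`. -/
theorem stmt0 (n : ℕ) (hn : 1 ≤ n) (h : Fin n → ℝ) (H : Fin n → Fin n → WithTop ℝ)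
    (Hsymm : ∀ i j : Fin n, H i j = H j i) :
    MnatConvex (quadF h H) ↔
      ((∀ i j k : Fin n, i ≠ j → j ≠ k → i ≠ k → min (H i k) (H j k) ≤ H i j) ∧
       (∀ i j : Fin n, i ≠ j → 0 ≤ H i j)) := by
  constructor
  · intro M
    exact necessityAux n h H Hsymm M
  · rintro ⟨hau, hnn⟩
    exact sufficiencyAux n h H Hsymm hau hnn
end

section
/- Let f(x_1,…,x_r) = Σ_{i∈[r]} c_i(x_i) + Σ_{1≤i<j≤r} c_{ij}(x_i, x_j) be a function on D_1 × ⋯ × D_r with unary costs c_i : D_i → ℝ₊ and binary costs c_{ij} : D_i × D_j → ℝ₊ ∪ {+∞} satisfying c_{ij} = c_{ji}. Let U := {(i,a) : i ∈ [r], a ∈ D_i} and define the symmetric partial matrix H = (h_{(i,a),(j,b)})_{(i,a),(j,b)∈U} by h_{(i,a),(j,b)} := c_{ij}(a,b) if i ≠ j and h_{(i,a),(j,b)} undefined if i = j. Then H is M♮-convex completable if and only if f satisfies the joint winner property and is Z-free. -/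
open Finset

/-- The quadratic function `x ↦ Σ_u h_u x_u + Σ_{{u,v} : u ≠ v} h_{uv} x_u x_v` on
`{0,1}^U`, the quadratic part summed over unordered pairs. (For symmetric `H` the value
`min (H u v) (H v u)` attached to the unordered pair `{u,v}` is exactly `h_{uv}`.) -/
noncomputable def quadFU {ι : Type*} [DecidableEq ι] (h : ι → ℝ) (H : ι → ι → WithTop ℝ)
    (S : Finset ι) : WithTop ℝ :=
  (∑ i ∈ S, (h i : WithTop ℝ)) +
    ∑ e ∈ S.sym2.filter (fun e => ¬ e.IsDiag),
      Sym2.lift ⟨fun a b => min (H a b) (H b a), fun _ _ => min_comm _ _⟩ e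

/-- The minimum of a family of values in `ℝ ∪ {+∞}` is attained at least twice. -/
def MinTwice {κ : Type*} (w : κ → WithTop ℝ) : Prop :=
  ∃ p q : κ, p ≠ q ∧ (∀ t, w p ≤ w t) ∧ w p = w q

/-- The joint winner property for the binary costs `c_{ij}`. -/
def JWP (r : ℕ) (d : Fin r → ℕ)
    (cb : ∀ i j : Fin r, Fin (d i) → Fin (d j) → WithTop ℝ) : Prop :=
  ∀ i j k : Fin r, i ≠ j → j ≠ k → i ≠ k →
    ∀ (a : Fin (d i)) (b : Fin (d j)) (c : Fin (d k)),
      min (cb j k b c) (cb i k a c) ≤ cb i j a b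

/-- Z-freeness: `|argmin{c_{ij}(a,c), c_{ij}(a,d), c_{ij}(b,c), c_{ij}(b,d)}| ≥ 2` for all
distinct `i, j ∈ [r]`, distinct `a, b ∈ D_i` and distinct `c, d ∈ D_j`. -/
def ZFree (r : ℕ) (d : Fin r → ℕ)
    (cb : ∀ i j : Fin r, Fin (d i) → Fin (d j) → WithTop ℝ) : Prop :=
  ∀ i j : Fin r, i ≠ j → ∀ a b : Fin (d i), a ≠ b → ∀ c e : Fin (d j), c ≠ e →
    MinTwice ![cb i j a c, cb i j a e, cb i j b c, cb i j b e]

variable {ι : Type*} [DecidableEq ι]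

/-- Anti-ultrametric triple condition. -/
def Tri (A : ι → ι → WithTop ℝ) : Prop :=
  ∀ u v w : ι, u ≠ v → u ≠ w → v ≠ w → min (A u w) (A v w) ≤ A u v

lemma cancel_left {x y : WithTop ℝ} (a : ℝ) (h : (a : WithTop ℝ) + x ≤ (a : WithTop ℝ) + y) :
    x ≤ y :=
  (WithTop.add_le_add_iff_left (WithTop.coe_ne_top)).mp h

lemma exists_injOn_of_card_le (s t : Finset ι) (h : s.card ≤ t.card) :
    ∃ f : ι → ι, Set.InjOn f s ∧ ∀ x ∈ s, f x ∈ t := by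
  obtain ⟨t', ht't, ht'c⟩ := Finset.exists_subset_card_eq h
  have e : (s : Type _) ≃ t' := Finset.equivOfCardEq ht'c.symm
  classical
  refine ⟨fun x => if hx : x ∈ s then (e ⟨x, hx⟩ : ι) else x, ?_, ?_⟩
  · intro x hx y hy hxy
    simp only [Finset.mem_coe] at hx hy
    simp only [dif_pos hx, dif_pos hy] at hxy
    have := e.injective (Subtype.ext hxy)
    exact congrArg Subtype.val this
  · intro x hx
    simp only [dif_pos hx]
    exact ht't (e ⟨x, hx⟩).2

lemma extend_inj (S T : Finset ι) (hST : S.card ≤ T.card) (p : ι → Prop) [DecidablePred p]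
    (φB : ι → ι) (F : ι → WithTop ℝ)
    (hinj : Set.InjOn φB (S.filter p))
    (himg : ∀ x ∈ S.filter p, φB x ∈ T)
    (hle : ∀ x ∈ S.filter p, F x ≤ F (φB x))
    (hcheap : ∀ x ∈ S, ¬ p x → ∀ t ∈ T, F x ≤ F t) :
    ∃ φ : ι → ι, Set.InjOn φ S ∧ (∀ x ∈ S, φ x ∈ T) ∧ ∀ x ∈ S, F x ≤ F (φ x) := by
  classical
  set I := (S.filter p).image φB with hI
  have hIT : I ⊆ T := by
    intro t ht
    obtain ⟨x, hx, rfl⟩ := Finset.mem_image.mp ht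
    exact himg x hx
  have hcard : (S.filter (fun x => ¬ p x)).card ≤ (T \ I).card := by
    have h1 : I.card = (S.filter p).card := Finset.card_image_of_injOn hinj
    have h2 : (T \ I).card = T.card - I.card := Finset.card_sdiff_of_subset hIT
    have h3 := Finset.card_filter_add_card_filter_not (s := S) p
    omega
  obtain ⟨ξ, hξinj, hξmem⟩ := exists_injOn_of_card_le _ _ hcard
  refine ⟨fun x => if p x then φB x else ξ x, ?_, ?_, ?_⟩
  · intro x hx y hy hxy
    simp only [Finset.mem_coe] at hx hy
    by_cases px : p x <;> by_cases py : p y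
    · simp only [if_pos px, if_pos py] at hxy
      exact hinj (by simp [Finset.mem_filter, hx, px]) (by simp [Finset.mem_filter, hy, py]) hxy
    · simp only [if_pos px, if_neg py] at hxy
      have h1 : φB x ∈ I := Finset.mem_image.mpr ⟨x, Finset.mem_filter.mpr ⟨hx, px⟩, rfl⟩
      have h2 : ξ y ∈ T \ I := hξmem y (Finset.mem_filter.mpr ⟨hy, py⟩)
      rw [hxy] at h1
      exact absurd h1 (Finset.mem_sdiff.mp h2).2
    · simp only [if_neg px, if_pos py] at hxy
      have h1 : φB y ∈ I := Finset.mem_image.mpr ⟨y, Finset.mem_filter.mpr ⟨hy, py⟩, rfl⟩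
      have h2 : ξ x ∈ T \ I := hξmem x (Finset.mem_filter.mpr ⟨hx, px⟩)
      rw [← hxy] at h1
      exact absurd h1 (Finset.mem_sdiff.mp h2).2
    · simp only [if_neg px, if_neg py] at hxy
      exact hξinj (by simp [Finset.mem_filter, hx, px]) (by simp [Finset.mem_filter, hy, py]) hxy
  · intro x hx
    by_cases px : p x
    · simp only [if_pos px]; exact himg x (Finset.mem_filter.mpr ⟨hx, px⟩)
    · simp only [if_neg px]
      exact (Finset.mem_sdiff.mp (hξmem x (Finset.mem_filter.mpr ⟨hx, px⟩))).1
  · intro x hx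
    by_cases px : p x
    · simp only [if_pos px]; exact hle x (Finset.mem_filter.mpr ⟨hx, px⟩)
    · simp only [if_neg px]
      exact hcheap x hx px _ (Finset.mem_sdiff.mp (hξmem x (Finset.mem_filter.mpr ⟨hx, px⟩))).1

lemma class_setup (A : ι → ι → WithTop ℝ) (hsym : ∀ u v, A u v = A v u) (htri : Tri A)
    (V : Finset ι) (b : ι) (hb : b ∈ V) (h2 : 2 ≤ V.card) :
    ∃ (m : WithTop ℝ) (C : Finset ι), b ∈ C ∧ C ⊆ V ∧ C.card < V.card ∧
      (∀ u ∈ V, ∀ v ∈ V, u ≠ v → m ≤ A u v) ∧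
      (∀ x ∈ C, ∀ y ∈ V, y ∉ C → A x y = m) := by
  classical
  have hP : (V.offDiag).Nonempty := by
    obtain ⟨a, ha, c, hc, hac⟩ := Finset.one_lt_card.mp (lt_of_lt_of_le one_lt_two h2)
    exact ⟨(a, c), Finset.mem_offDiag.mpr ⟨ha, hc, hac⟩⟩
  set m := V.offDiag.inf' hP (fun q => A q.1 q.2) with hm
  have hmle : ∀ u ∈ V, ∀ v ∈ V, u ≠ v → m ≤ A u v := fun u hu v hv huv =>
    Finset.inf'_le (fun q => A q.1 q.2)
      (show (u, v) ∈ V.offDiag from Finset.mem_offDiag.mpr ⟨hu, hv, huv⟩)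
  set C := V.filter (fun v => v = b ∨ m < A b v) with hC
  have hbC : b ∈ C := Finset.mem_filter.mpr ⟨hb, Or.inl rfl⟩
  have hCV : C ⊆ V := Finset.filter_subset _ _
  have hmemC : ∀ v ∈ V, v ≠ b → (v ∈ C ↔ m < A b v) := by
    intro v hv hvb
    simp [hC, Finset.mem_filter, hv, hvb]
  have hcross : ∀ x ∈ C, ∀ y ∈ V, y ∉ C → A x y = m := by
    intro x hxC y hy hyC
    have hxV := hCV hxC
    have hyb : y ≠ b := fun h => hyC (h ▸ hbC)
    have hyle : ¬ m < A b y := fun hlt => hyC ((hmemC y hy hyb).mpr hlt)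
    have hxy : x ≠ y := fun h => hyC (h ▸ hxC)
    refine le_antisymm ?_ (hmle x hxV y hy hxy)
    by_cases hxb : x = b
    · subst hxb; exact not_lt.mp hyle
    · have hbx : m < A b x := by
        rcases (Finset.mem_filter.mp hxC).2 with h | h
        · exact absurd h hxb
        · exact h
      by_contra hcon
      push_neg at hcon
      have h1 : min (A b x) (A y x) ≤ A b y :=
        htri b y x (Ne.symm hyb) (fun h => hxb h.symm) (Ne.symm hxy)
      have h2 : m < min (A b x) (A y x) := lt_min hbx (by rw [hsym y x]; exact hcon)
      exact hyle (lt_of_lt_of_le h2 h1)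
  have hcard : C.card < V.card := by
    obtain ⟨q, hq, hqm⟩ := Finset.exists_mem_eq_inf' hP (fun q => A q.1 q.2)
    obtain ⟨hq1, hq2, hq12⟩ := Finset.mem_offDiag.mp hq
    have hout : q.1 ∉ C ∨ q.2 ∉ C := by
      by_contra hcon
      push_neg at hcon
      obtain ⟨h1C, h2C⟩ := hcon
      have hlt : m < A q.1 q.2 := by
        by_cases e1 : q.1 = b
        · have h2b : q.2 ≠ b := by rw [← e1]; exact Ne.symm hq12
          have := (hmemC q.2 hq2 h2b).mp h2C
          rw [e1]; exact this
        · by_cases e2 : q.2 = b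
          · have := (hmemC q.1 hq1 e1).mp h1C
            rw [e2, hsym]; exact this
          · have hb1 := (hmemC q.1 hq1 e1).mp h1C
            have hb2 := (hmemC q.2 hq2 e2).mp h2C
            have h1 : min (A q.1 b) (A q.2 b) ≤ A q.1 q.2 := htri q.1 q.2 b hq12 e1 e2
            refine lt_of_lt_of_le (lt_min ?_ ?_) h1
            · rw [hsym q.1 b]; exact hb1
            · rw [hsym q.2 b]; exact hb2
      rw [← hqm] at hlt
      exact lt_irrefl m hlt
    have hex : ∃ y ∈ V, y ∉ C := by
      rcases hout with h | h
      exacts [⟨q.1, hq1, h⟩, ⟨q.2, hq2, h⟩]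
    obtain ⟨y, hyV, hyC⟩ := hex
    exact Finset.card_lt_card ((Finset.ssubset_iff_of_subset hCV).mpr ⟨y, hyV, hyC⟩)
  exact ⟨m, C, hbC, hCV, hcard, hmle, hcross⟩

lemma move_inj (A : ι → ι → WithTop ℝ) (hsym : ∀ u v, A u v = A v u) (htri : Tri A) :
    ∀ n : ℕ, ∀ X Y : Finset ι, (X ∪ Y).card ≤ n → X.card < Y.card →
    ∃ j ∈ Y, j ∉ X ∧ ∃ φ : ι → ι, Set.InjOn φ X ∧ (∀ x ∈ X, φ x ∈ Y.erase j) ∧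
      ∀ x ∈ X, A j x ≤ A j (φ x) := by
  intro n
  induction n with
  | zero =>
    intro X Y hn hc
    have : Y.card = 0 :=
      le_antisymm (le_trans (Finset.card_le_card Finset.subset_union_right) hn) (Nat.zero_le _)
    omega
  | succ n IH =>
    intro X Y hn hc
    classical
    set V := X ∪ Y with hV
    have hnsub : ¬ Y ⊆ X := fun h => absurd (Finset.card_le_card h) (not_le.mpr hc)
    obtain ⟨y0, hy0Y, hy0X⟩ := Finset.not_subset.mp hnsub
    by_cases hV2 : 2 ≤ V.card
    swap
    · have hXe : X = ∅ := by
        rw [Finset.eq_empty_iff_forall_notMem]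
        intro x hx
        have hxV : x ∈ V := Finset.mem_union_left _ hx
        have hyV : y0 ∈ V := Finset.mem_union_right _ hy0Y
        have hxy : x ≠ y0 := fun h => hy0X (h ▸ hx)
        exact hV2 (Finset.one_lt_card.mpr ⟨x, hxV, y0, hyV, hxy⟩)
      exact ⟨y0, hy0Y, hy0X, id, by simp [hXe], by simp [hXe], by simp [hXe]⟩
    obtain ⟨m, C, hbC, hCV, hCcard, hmle, hcross⟩ :=
      class_setup A hsym htri V y0 (Finset.mem_union_right _ hy0Y) hV2
    have hsplitX := Finset.card_filter_add_card_filter_not (s := X) (fun x => x ∈ C)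
    have hsplitY := Finset.card_filter_add_card_filter_not (s := Y) (fun x => x ∈ C)
    by_cases hcase : (X.filter (fun x => x ∈ C)).card < (Y.filter (fun x => x ∈ C)).card
    · have hsub : (X.filter (fun x => x ∈ C)) ∪ (Y.filter (fun x => x ∈ C)) ⊆ C := by
        intro t ht
        rcases Finset.mem_union.mp ht with h | h <;> exact (Finset.mem_filter.mp h).2
      have hbound : ((X.filter (fun x => x ∈ C)) ∪ (Y.filter (fun x => x ∈ C))).card ≤ n :=
        le_trans (Finset.card_le_card hsub) (by omega)
      obtain ⟨j, hjY1, hjX1, φB, hφinj, hφmem, hφle⟩ := IH _ _ hbound hcase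
      have hjC : j ∈ C := (Finset.mem_filter.mp hjY1).2
      have hjY : j ∈ Y := (Finset.mem_filter.mp hjY1).1
      have hjX : j ∉ X := fun h => hjX1 (Finset.mem_filter.mpr ⟨h, hjC⟩)
      refine ⟨j, hjY, hjX, ?_⟩
      have hcards : X.card ≤ (Y.erase j).card := by
        rw [Finset.card_erase_of_mem hjY]; omega
      refine extend_inj X (Y.erase j) hcards (fun x => x ∈ C) φB (A j) hφinj ?_ hφle ?_
      · intro x hx
        have h1 := hφmem x hx
        exact Finset.mem_erase.mpr
          ⟨(Finset.mem_erase.mp h1).1, (Finset.mem_filter.mp (Finset.mem_of_mem_erase h1)).1⟩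
      · intro x hxX hxC t ht
        have hxV : x ∈ V := Finset.mem_union_left _ hxX
        have h1 : A j x = m := hcross j hjC x hxV hxC
        have htV : t ∈ V := Finset.mem_union_right _ (Finset.mem_of_mem_erase ht)
        have hjt : j ≠ t := fun h => (Finset.mem_erase.mp ht).1 h.symm
        rw [h1]
        exact hmle j (hCV hjC) t htV hjt
    · have hcase2 : (X.filter (fun x => ¬ x ∈ C)).card < (Y.filter (fun x => ¬ x ∈ C)).card := by
        omega
      have hsub : (X.filter (fun x => ¬ x ∈ C)) ∪ (Y.filter (fun x => ¬ x ∈ C)) ⊆ V \ C := by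
        intro t ht
        rcases Finset.mem_union.mp ht with h | h
        · exact Finset.mem_sdiff.mpr
            ⟨Finset.mem_union_left _ (Finset.mem_filter.mp h).1, (Finset.mem_filter.mp h).2⟩
        · exact Finset.mem_sdiff.mpr
            ⟨Finset.mem_union_right _ (Finset.mem_filter.mp h).1, (Finset.mem_filter.mp h).2⟩
      have hCpos : 1 ≤ C.card := Finset.card_pos.mpr ⟨y0, hbC⟩
      have hbound : ((X.filter (fun x => ¬ x ∈ C)) ∪ (Y.filter (fun x => ¬ x ∈ C))).card ≤ n := by
        have h1 := Finset.card_le_card hsub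
        have h2 : (V \ C).card = V.card - C.card := Finset.card_sdiff_of_subset hCV
        omega
      obtain ⟨j, hjY2, hjX2, ψ, hψinj, hψmem, hψle⟩ := IH _ _ hbound hcase2
      have hjY : j ∈ Y := (Finset.mem_filter.mp hjY2).1
      have hjnC : j ∉ C := (Finset.mem_filter.mp hjY2).2
      have hjX : j ∉ X := fun h => hjX2 (Finset.mem_filter.mpr ⟨h, hjnC⟩)
      refine ⟨j, hjY, hjX, ?_⟩
      have hcards : X.card ≤ (Y.erase j).card := by
        rw [Finset.card_erase_of_mem hjY]; omega
      refine extend_inj X (Y.erase j) hcards (fun x => ¬ x ∈ C) ψ (A j) hψinj ?_ hψle ?_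
      · intro x hx
        have h1 := hψmem x hx
        exact Finset.mem_erase.mpr
          ⟨(Finset.mem_erase.mp h1).1, (Finset.mem_filter.mp (Finset.mem_of_mem_erase h1)).1⟩
      · intro x hxX hxC t ht
        have hxC' : x ∈ C := not_not.mp hxC
        have hxV : x ∈ V := Finset.mem_union_left _ hxX
        have hjV : j ∈ V := Finset.mem_union_right _ hjY
        have h1 : A j x = m := by rw [hsym]; exact hcross x hxC' j hjV hjnC
        have htV : t ∈ V := Finset.mem_union_right _ (Finset.mem_of_mem_erase ht)
        have hjt : j ≠ t := fun h => (Finset.mem_erase.mp ht).1 h.symm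
        rw [h1]
        exact hmle j hjV t htV hjt

lemma ex_main (A : ι → ι → WithTop ℝ) (hsym : ∀ u v, A u v = A v u) (htri : Tri A) :
    ∀ n : ℕ, ∀ X Y : Finset ι, ∀ i : ι, (X ∪ Y).card ≤ n → i ∈ X → i ∉ Y →
    (∃ φ : ι → ι, Set.InjOn φ Y ∧ (∀ y ∈ Y, φ y ∈ X.erase i) ∧ ∀ y ∈ Y, A i y ≤ A i (φ y)) ∨
    (∃ j ∈ Y, j ∉ X ∧
      ∑ x ∈ X.erase i, A j x + ∑ y ∈ Y.erase j, A i y ≤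
      ∑ x ∈ X.erase i, A i x + ∑ y ∈ Y.erase j, A j y) := by
  intro n
  induction n with
  | zero =>
    intro X Y i hn hiX hiY
    exfalso
    have : i ∈ X ∪ Y := Finset.mem_union_left _ hiX
    have := Finset.card_pos.mpr ⟨i, this⟩
    omega
  | succ n IH =>
    intro X Y i hn hiX hiY
    classical
    set V := X ∪ Y with hV
    rcases Y.eq_empty_or_nonempty with hYe | ⟨y1, hy1⟩
    · exact Or.inl ⟨id, by simp [hYe], by simp [hYe], by simp [hYe]⟩
    have hiV : i ∈ V := Finset.mem_union_left _ hiX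
    have hy1V : y1 ∈ V := Finset.mem_union_right _ hy1
    have hiy1 : i ≠ y1 := fun h => hiY (h ▸ hy1)
    have hV2 : 2 ≤ V.card := Finset.one_lt_card.mpr ⟨i, hiV, y1, hy1V, hiy1⟩
    obtain ⟨m, C, hiC, hCV, hCcard, hmle, hcross⟩ := class_setup A hsym htri V i hiV hV2
    set X₁ := X.filter (fun x => x ∈ C) with hX₁
    set Y₁ := Y.filter (fun x => x ∈ C) with hY₁
    set Xt := X.filter (fun x => ¬ x ∈ C) with hXt
    set Yt := Y.filter (fun x => ¬ x ∈ C) with hYt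
    have hiX₁ : i ∈ X₁ := Finset.mem_filter.mpr ⟨hiX, hiC⟩
    have hiY₁ : i ∉ Y₁ := fun h => hiY (Finset.mem_filter.mp h).1
    have hXV : X ⊆ V := Finset.subset_union_left
    have hYV : Y ⊆ V := Finset.subset_union_right
    have hXsp : X₁.card + Xt.card = X.card := by
      exact Finset.card_filter_add_card_filter_not (s := X) (fun x => x ∈ C)
    have hYsp : Y₁.card + Yt.card = Y.card := by
      exact Finset.card_filter_add_card_filter_not (s := Y) (fun x => x ∈ C)
    have hbound : (X₁ ∪ Y₁).card ≤ n := by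
      have hsub : X₁ ∪ Y₁ ⊆ C := by
        intro t ht
        rcases Finset.mem_union.mp ht with h | h <;> exact (Finset.mem_filter.mp h).2
      have := Finset.card_le_card hsub
      omega
    -- set equalities for sum splitting
    have eE1 : (X.erase i).filter (fun x => x ∈ C) = X₁.erase i := by rw [Finset.filter_erase]
    have eE2 : (X.erase i).filter (fun x => ¬ x ∈ C) = Xt := by
      rw [Finset.filter_erase]
      exact Finset.erase_eq_of_notMem (fun h => (Finset.mem_filter.mp h).2 hiC)
    rcases IH X₁ Y₁ i hbound hiX₁ hiY₁ with ⟨φ1, hφinj, hφmem, hφle⟩ | ⟨j, hjY₁, hjX₁, hsum⟩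
    · -- IH gave an injection Y₁ → X₁.erase i
      have hc1 : Y₁.card ≤ (X₁.erase i).card :=
        Finset.card_le_card_of_injOn φ1 hφmem hφinj
      have hX₁card : (X₁.erase i).card = X₁.card - 1 := Finset.card_erase_of_mem hiX₁
      have hX₁pos : 1 ≤ X₁.card := Finset.card_pos.mpr ⟨i, hiX₁⟩
      by_cases hYtc : Yt.card ≤ Xt.card
      · -- global left branch
        left
        have hcards : Y.card ≤ (X.erase i).card := by
          rw [Finset.card_erase_of_mem hiX]
          omega
        refine extend_inj Y (X.erase i) hcards (fun y => y ∈ C) φ1 (A i) hφinj ?_ hφle ?_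
        · intro y hy
          have h1 := hφmem y hy
          exact Finset.mem_erase.mpr
            ⟨(Finset.mem_erase.mp h1).1, (Finset.mem_filter.mp (Finset.mem_of_mem_erase h1)).1⟩
        · intro y hyY hyC t ht
          have h1 : A i y = m := hcross i hiC y (hYV hyY) hyC
          have htV : t ∈ V := hXV (Finset.mem_of_mem_erase ht)
          have hit : i ≠ t := fun h => (Finset.mem_erase.mp ht).1 h.symm
          rw [h1]
          exact hmle i hiV t htV hit
      · -- move an element of Yt into X
        push_neg at hYtc
        have hsubt : Xt ∪ Yt ⊆ V \ C := by
          intro t ht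
          rcases Finset.mem_union.mp ht with h | h
          · exact Finset.mem_sdiff.mpr ⟨hXV (Finset.mem_filter.mp h).1, (Finset.mem_filter.mp h).2⟩
          · exact Finset.mem_sdiff.mpr ⟨hYV (Finset.mem_filter.mp h).1, (Finset.mem_filter.mp h).2⟩
        have hCpos : 1 ≤ C.card := Finset.card_pos.mpr ⟨i, hiC⟩
        have hboundt : (Xt ∪ Yt).card ≤ n := by
          have h1 := Finset.card_le_card hsubt
          have h2 : (V \ C).card = V.card - C.card := Finset.card_sdiff_of_subset hCV
          omega
        obtain ⟨j, hjYt, hjXt, ψ, hψinj, hψmem, hψle⟩ := move_inj A hsym htri n Xt Yt hboundt hYtc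
        have hjY : j ∈ Y := (Finset.mem_filter.mp hjYt).1
        have hjnC : j ∉ C := (Finset.mem_filter.mp hjYt).2
        have hjX : j ∉ X := fun h => hjXt (Finset.mem_filter.mpr ⟨h, hjnC⟩)
        have hjV : j ∈ V := hYV hjY
        have hji : j ≠ i := fun h => hjnC (h ▸ hiC)
        right
        refine ⟨j, hjY, hjX, ?_⟩
        have hc2 : Xt.card ≤ (Yt.erase j).card :=
          Finset.card_le_card_of_injOn ψ hψmem hψinj
        -- more set equalities
        have eF1 : (Y.erase j).filter (fun x => x ∈ C) = Y₁ := by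
          rw [Finset.filter_erase]
          exact Finset.erase_eq_of_notMem (fun h => hjnC (Finset.mem_filter.mp h).2)
        have eF2 : (Y.erase j).filter (fun x => ¬ x ∈ C) = Yt.erase j := by
          rw [Finset.filter_erase]
        -- constants
        have cA : ∀ x ∈ X₁.erase i, A j x = m := by
          intro x hx
          have hxC : x ∈ C := (Finset.mem_filter.mp (Finset.mem_of_mem_erase hx)).2
          have hxV : x ∈ V := hXV (Finset.mem_filter.mp (Finset.mem_of_mem_erase hx)).1
          rw [hsym]
          exact hcross x hxC j hjV hjnC
        have cB : ∀ y ∈ Yt.erase j, A i y = m := by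
          intro y hy
          have h1 := Finset.mem_of_mem_erase hy
          exact hcross i hiC y (hYV (Finset.mem_filter.mp h1).1) (Finset.mem_filter.mp h1).2
        have cC : ∀ x ∈ Xt, A i x = m := fun x hx =>
          hcross i hiC x (hXV (Finset.mem_filter.mp hx).1) (Finset.mem_filter.mp hx).2
        have cD : ∀ y ∈ Y₁, A j y = m := by
          intro y hy
          rw [hsym]
          exact hcross y (Finset.mem_filter.mp hy).2 j hjV hjnC
        -- bound 1 : ∑_{Y₁} A i + (n1 - q) • m ≤ ∑_{X₁.erase i} A i
        have hmleE : ∀ x ∈ X₁.erase i, m ≤ A i x := by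
          intro x hx
          have hxV : x ∈ V := hXV (Finset.mem_filter.mp (Finset.mem_of_mem_erase hx)).1
          exact hmle i hiV x hxV (fun h => (Finset.mem_erase.mp hx).1 h.symm)
        have hmleF : ∀ y ∈ Yt.erase j, m ≤ A j y := by
          intro y hy
          have hyV : y ∈ V := hYV (Finset.mem_filter.mp (Finset.mem_of_mem_erase hy)).1
          exact hmle j hjV y hyV (fun h => (Finset.mem_erase.mp hy).1 h.symm)
        have b1 : ∑ y ∈ Y₁, A i y + ((X₁.erase i).card - Y₁.card) • m ≤
            ∑ x ∈ X₁.erase i, A i x := by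
          have hI1 : Y₁.image φ1 ⊆ X₁.erase i := by
            intro t ht
            obtain ⟨y, hy, rfl⟩ := Finset.mem_image.mp ht
            exact hφmem y hy
          have himg : ∑ x ∈ Y₁.image φ1, A i x = ∑ y ∈ Y₁, A i (φ1 y) :=
            Finset.sum_image (fun x hx y hy h => hφinj hx hy h)
          have hsd := Finset.sum_sdiff (f := fun x => A i x) hI1
          have hcardsd : ((X₁.erase i) \ (Y₁.image φ1)).card = (X₁.erase i).card - Y₁.card := by
            rw [Finset.card_sdiff_of_subset hI1, Finset.card_image_of_injOn hφinj]
          calc ∑ y ∈ Y₁, A i y + ((X₁.erase i).card - Y₁.card) • m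
              ≤ ∑ y ∈ Y₁, A i (φ1 y) + ∑ x ∈ (X₁.erase i) \ (Y₁.image φ1), A i x := by
                refine add_le_add (Finset.sum_le_sum hφle) ?_
                rw [← hcardsd, ← Finset.sum_const]
                exact Finset.sum_le_sum (fun x hx =>
                  hmleE x (Finset.mem_sdiff.mp hx).1)
            _ = ∑ x ∈ (X₁.erase i) \ (Y₁.image φ1), A i x + ∑ x ∈ Y₁.image φ1, A i x := by
                rw [himg]; exact add_comm _ _
            _ = ∑ x ∈ X₁.erase i, A i x := hsd
        have b2 : ∑ x ∈ Xt, A j x + ((Yt.erase j).card - Xt.card) • m ≤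
            ∑ y ∈ Yt.erase j, A j y := by
          have hI2 : Xt.image ψ ⊆ Yt.erase j := by
            intro t ht
            obtain ⟨x, hx, rfl⟩ := Finset.mem_image.mp ht
            exact hψmem x hx
          have himg : ∑ y ∈ Xt.image ψ, A j y = ∑ x ∈ Xt, A j (ψ x) :=
            Finset.sum_image (fun x hx y hy h => hψinj hx hy h)
          have hsd := Finset.sum_sdiff (f := fun y => A j y) hI2
          have hcardsd : ((Yt.erase j) \ (Xt.image ψ)).card = (Yt.erase j).card - Xt.card := by
            rw [Finset.card_sdiff_of_subset hI2, Finset.card_image_of_injOn hψinj]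
          calc ∑ x ∈ Xt, A j x + ((Yt.erase j).card - Xt.card) • m
              ≤ ∑ x ∈ Xt, A j (ψ x) + ∑ y ∈ (Yt.erase j) \ (Xt.image ψ), A j y := by
                refine add_le_add (Finset.sum_le_sum hψle) ?_
                rw [← hcardsd, ← Finset.sum_const]
                exact Finset.sum_le_sum (fun y hy =>
                  hmleF y (Finset.mem_sdiff.mp hy).1)
            _ = ∑ y ∈ (Yt.erase j) \ (Xt.image ψ), A j y + ∑ y ∈ Xt.image ψ, A j y := by
                rw [himg]; exact add_comm _ _
            _ = ∑ y ∈ Yt.erase j, A j y := hsd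
        -- now assemble
        have splitL1 : ∑ x ∈ X.erase i, A j x =
            ∑ x ∈ X₁.erase i, A j x + ∑ x ∈ Xt, A j x := by
          rw [← eE1, ← eE2, Finset.sum_filter_add_sum_filter_not]
        have splitL2 : ∑ y ∈ Y.erase j, A i y =
            ∑ y ∈ Y₁, A i y + ∑ y ∈ Yt.erase j, A i y := by
          rw [← eF1, ← eF2, Finset.sum_filter_add_sum_filter_not]
        have splitR1 : ∑ x ∈ X.erase i, A i x =
            ∑ x ∈ X₁.erase i, A i x + ∑ x ∈ Xt, A i x := by
          rw [← eE1, ← eE2, Finset.sum_filter_add_sum_filter_not]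
        have splitR2 : ∑ y ∈ Y.erase j, A j y =
            ∑ y ∈ Y₁, A j y + ∑ y ∈ Yt.erase j, A j y := by
          rw [← eF1, ← eF2, Finset.sum_filter_add_sum_filter_not]
        rw [splitL1, splitL2, splitR1, splitR2]
        rw [Finset.sum_congr rfl cA, Finset.sum_congr rfl cB,
            Finset.sum_congr rfl cC, Finset.sum_congr rfl cD,
            Finset.sum_const, Finset.sum_const, Finset.sum_const, Finset.sum_const]
        -- goal : n1•m + P + (Q + n2•m) ≤ S1 + p•m + (q•m + S2)
        have e1 : (X₁.erase i).card • m =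
            ((X₁.erase i).card - Y₁.card) • m + Y₁.card • m := by
          rw [← add_nsmul]
          congr 1
          omega
        have e2 : (Yt.erase j).card • m =
            ((Yt.erase j).card - Xt.card) • m + Xt.card • m := by
          rw [← add_nsmul]
          congr 1
          omega
        calc (X₁.erase i).card • m + ∑ x ∈ Xt, A j x +
              (∑ y ∈ Y₁, A i y + (Yt.erase j).card • m)
            = (∑ y ∈ Y₁, A i y + ((X₁.erase i).card - Y₁.card) • m) +
              (∑ x ∈ Xt, A j x + ((Yt.erase j).card - Xt.card) • m) +
              (Y₁.card • m + Xt.card • m) := by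
              rw [e1, e2]; abel
          _ ≤ ∑ x ∈ X₁.erase i, A i x + ∑ y ∈ Yt.erase j, A j y +
              (Y₁.card • m + Xt.card • m) := by
              exact add_le_add (add_le_add b1 b2) le_rfl
          _ = ∑ x ∈ X₁.erase i, A i x + Xt.card • m +
              (Y₁.card • m + ∑ y ∈ Yt.erase j, A j y) := by abel
    · -- IH gave an exchange inside C
      have hjC : j ∈ C := (Finset.mem_filter.mp hjY₁).2
      have hjY : j ∈ Y := (Finset.mem_filter.mp hjY₁).1
      have hjX : j ∉ X := fun h => hjX₁ (Finset.mem_filter.mpr ⟨h, hjC⟩)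
      have hjV : j ∈ V := hYV hjY
      right
      refine ⟨j, hjY, hjX, ?_⟩
      have eF1 : (Y.erase j).filter (fun x => x ∈ C) = Y₁.erase j := by rw [Finset.filter_erase]
      have eF2 : (Y.erase j).filter (fun x => ¬ x ∈ C) = Yt := by
        rw [Finset.filter_erase]
        exact Finset.erase_eq_of_notMem (fun h => (Finset.mem_filter.mp h).2 hjC)
      have cXt : ∀ x ∈ Xt, A j x = A i x := by
        intro x hx
        have hxV : x ∈ V := hXV (Finset.mem_filter.mp hx).1
        have hxC : x ∉ C := (Finset.mem_filter.mp hx).2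
        rw [hcross j hjC x hxV hxC]
        exact (hcross i hiC x hxV hxC).symm
      have cYt : ∀ y ∈ Yt, A i y = A j y := by
        intro y hy
        have hyV : y ∈ V := hYV (Finset.mem_filter.mp hy).1
        have hyC : y ∉ C := (Finset.mem_filter.mp hy).2
        rw [hcross i hiC y hyV hyC]
        exact (hcross j hjC y hyV hyC).symm
      have splitL1 : ∑ x ∈ X.erase i, A j x =
          ∑ x ∈ X₁.erase i, A j x + ∑ x ∈ Xt, A j x := by
        rw [← eE1, ← eE2, Finset.sum_filter_add_sum_filter_not]
      have splitL2 : ∑ y ∈ Y.erase j, A i y =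
          ∑ y ∈ Y₁.erase j, A i y + ∑ y ∈ Yt, A i y := by
        rw [← eF1, ← eF2, Finset.sum_filter_add_sum_filter_not]
      have splitR1 : ∑ x ∈ X.erase i, A i x =
          ∑ x ∈ X₁.erase i, A i x + ∑ x ∈ Xt, A i x := by
        rw [← eE1, ← eE2, Finset.sum_filter_add_sum_filter_not]
      have splitR2 : ∑ y ∈ Y.erase j, A j y =
          ∑ y ∈ Y₁.erase j, A j y + ∑ y ∈ Yt, A j y := by
        rw [← eF1, ← eF2, Finset.sum_filter_add_sum_filter_not]
      rw [splitL1, splitL2, splitR1, splitR2,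
          Finset.sum_congr rfl cXt, Finset.sum_congr rfl cYt]
      calc ∑ x ∈ X₁.erase i, A j x + ∑ x ∈ Xt, A i x +
            (∑ y ∈ Y₁.erase j, A i y + ∑ y ∈ Yt, A j y)
          = (∑ x ∈ X₁.erase i, A j x + ∑ y ∈ Y₁.erase j, A i y) +
            (∑ x ∈ Xt, A i x + ∑ y ∈ Yt, A j y) := by abel
        _ ≤ (∑ x ∈ X₁.erase i, A i x + ∑ y ∈ Y₁.erase j, A j y) +
            (∑ x ∈ Xt, A i x + ∑ y ∈ Yt, A j y) := add_le_add hsum le_rfl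
        _ = ∑ x ∈ X₁.erase i, A i x + ∑ x ∈ Xt, A i x +
            (∑ y ∈ Y₁.erase j, A j y + ∑ y ∈ Yt, A j y) := by abel

lemma quadFU_insert (h : ι → ℝ) (H : ι → ι → WithTop ℝ) {S : Finset ι} {u : ι} (hu : u ∉ S) :
    quadFU h H (insert u S) =
      ((h u : WithTop ℝ) + ∑ x ∈ S, min (H u x) (H x u)) + quadFU h H S := by
  classical
  unfold quadFU
  rw [Finset.sum_insert hu]
  have hs2 : (insert u S).sym2.filter (fun e => ¬ e.IsDiag) =
      (S.image fun x => s(u, x)) ∪ S.sym2.filter (fun e => ¬ e.IsDiag) := by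
    rw [Finset.sym2_insert, Finset.filter_union]
    congr 1
    ext e
    simp only [Finset.mem_filter, Finset.mem_image, Finset.mem_insert]
    constructor
    · rintro ⟨⟨b, hb, rfl⟩, hnd⟩
      rcases hb with rfl | hb
      · exact absurd (Sym2.mk_isDiag_iff.mpr rfl) hnd
      · exact ⟨b, hb, rfl⟩
    · rintro ⟨b, hb, rfl⟩
      refine ⟨⟨b, Or.inr hb, rfl⟩, ?_⟩
      intro hd
      exact hu ((Sym2.mk_isDiag_iff.mp hd) ▸ hb)
  rw [hs2]
  have hdisj : Disjoint (S.image fun x => s(u, x)) (S.sym2.filter (fun e => ¬ e.IsDiag)) := by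
    rw [Finset.disjoint_left]
    rintro e he hef
    obtain ⟨b, hb, rfl⟩ := Finset.mem_image.mp he
    have := (Finset.mem_filter.mp hef).1
    exact hu (Finset.mk_mem_sym2_iff.mp this).1
  rw [Finset.sum_union hdisj]
  have himg : ∑ e ∈ S.image (fun x => s(u, x)),
      Sym2.lift ⟨fun a b => min (H a b) (H b a), fun _ _ => min_comm _ _⟩ e =
      ∑ x ∈ S, min (H u x) (H x u) := by
    rw [Finset.sum_image]
    · simp [Sym2.lift_mk]
    · intro x hx y hy hxy
      rcases Sym2.eq_iff.mp hxy with ⟨-, h⟩ | ⟨h1, h2⟩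
      · exact h
      · exfalso; rw [h2] at hx; exact hu hx
  rw [himg]
  abel

lemma quadFU_empty (h : ι → ℝ) (H : ι → ι → WithTop ℝ) : quadFU h H ∅ = 0 := by
  simp [quadFU]

lemma quadFU_singleton (h : ι → ℝ) (H : ι → ι → WithTop ℝ) (u : ι) :
    quadFU h H {u} = (h u : WithTop ℝ) := by
  have := quadFU_insert h H (S := ∅) (u := u) (by simp)
  simpa [quadFU_empty] using this

lemma mnat_of_tri (h : ι → ℝ) (H : ι → ι → WithTop ℝ)
    (htri : Tri (fun u v => min (H u v) (H v u)))
    (hpos : ∀ u v, (0 : WithTop ℝ) ≤ min (H u v) (H v u)) :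
    MnatConvex (quadFU h H) := by
  classical
  intro X Y i hi
  set A : ι → ι → WithTop ℝ := fun u v => min (H u v) (H v u) with hA
  have hsym : ∀ u v, A u v = A v u := fun u v => min_comm _ _
  obtain ⟨hiX, hiY⟩ := Finset.mem_sdiff.mp hi
  have hX : quadFU h H X =
      ((h i : WithTop ℝ) + ∑ x ∈ X.erase i, A i x) + quadFU h H (X.erase i) := by
    conv_lhs => rw [← Finset.insert_erase hiX]
    exact quadFU_insert h H (Finset.notMem_erase i X)
  have hIY : quadFU h H (insert i Y) =
      ((h i : WithTop ℝ) + ∑ y ∈ Y, A i y) + quadFU h H Y :=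
    quadFU_insert h H hiY
  rcases ex_main A hsym htri (X ∪ Y).card X Y i le_rfl hiX hiY with
    ⟨φ, hφinj, hφmem, hφle⟩ | ⟨j, hjY, hjX, hsum⟩
  · left
    have key : ∑ y ∈ Y, A i y ≤ ∑ x ∈ X.erase i, A i x := by
      have h1 : ∑ y ∈ Y, A i y ≤ ∑ y ∈ Y, A i (φ y) := Finset.sum_le_sum hφle
      have h2 : ∑ y ∈ Y, A i (φ y) = ∑ x ∈ Y.image φ, A i x :=
        (Finset.sum_image (fun x hx y hy hxy => hφinj hx hy hxy)).symm
      have h3 : Y.image φ ⊆ X.erase i := by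
        intro t ht
        obtain ⟨y, hy, rfl⟩ := Finset.mem_image.mp ht
        exact hφmem y hy
      have h4 : ∑ x ∈ Y.image φ, A i x ≤ ∑ x ∈ X.erase i, A i x :=
        Finset.sum_le_sum_of_subset_of_nonneg h3 (fun x _ _ => hpos i x)
      exact le_trans h1 (le_trans (le_of_eq h2) h4)
    rw [hX, hIY]
    calc quadFU h H (X.erase i) + (((h i : WithTop ℝ) + ∑ y ∈ Y, A i y) + quadFU h H Y)
        = (h i : WithTop ℝ) + ∑ y ∈ Y, A i y + quadFU h H (X.erase i) + quadFU h H Y := by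
          abel
      _ ≤ (h i : WithTop ℝ) + ∑ x ∈ X.erase i, A i x + quadFU h H (X.erase i) +
            quadFU h H Y := by
          exact add_le_add (add_le_add (add_le_add le_rfl key) le_rfl) le_rfl
      _ = ((h i : WithTop ℝ) + ∑ x ∈ X.erase i, A i x) + quadFU h H (X.erase i) +
            quadFU h H Y := by abel
  · right
    have hji : j ≠ i := fun he => hiY (he ▸ hjY)
    refine ⟨j, Finset.mem_sdiff.mpr ⟨hjY, hjX⟩, ?_⟩
    have hXj : quadFU h H (insert j (X.erase i)) =
        ((h j : WithTop ℝ) + ∑ x ∈ X.erase i, A j x) + quadFU h H (X.erase i) :=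
      quadFU_insert h H (fun hc => hjX (Finset.mem_of_mem_erase hc))
    have hYe : (insert i Y).erase j = insert i (Y.erase j) := by
      rw [Finset.erase_insert_of_ne (fun he => hji he.symm)]
    have hYi : quadFU h H ((insert i Y).erase j) =
        ((h i : WithTop ℝ) + ∑ y ∈ Y.erase j, A i y) + quadFU h H (Y.erase j) := by
      rw [hYe]
      exact quadFU_insert h H (fun hc => hiY (Finset.mem_of_mem_erase hc))
    have hY : quadFU h H Y =
        ((h j : WithTop ℝ) + ∑ y ∈ Y.erase j, A j y) + quadFU h H (Y.erase j) := by
      conv_lhs => rw [← Finset.insert_erase hjY]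
      exact quadFU_insert h H (Finset.notMem_erase j Y)
    rw [hX, hXj, hYi, hY]
    calc ((h j : WithTop ℝ) + ∑ x ∈ X.erase i, A j x) + quadFU h H (X.erase i) +
          (((h i : WithTop ℝ) + ∑ y ∈ Y.erase j, A i y) + quadFU h H (Y.erase j))
        = (∑ x ∈ X.erase i, A j x + ∑ y ∈ Y.erase j, A i y) +
          ((h i : WithTop ℝ) + (h j : WithTop ℝ) + quadFU h H (X.erase i) +
            quadFU h H (Y.erase j)) := by abel
      _ ≤ (∑ x ∈ X.erase i, A i x + ∑ y ∈ Y.erase j, A j y) +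
          ((h i : WithTop ℝ) + (h j : WithTop ℝ) + quadFU h H (X.erase i) +
            quadFU h H (Y.erase j)) := add_le_add hsum le_rfl
      _ = ((h i : WithTop ℝ) + ∑ x ∈ X.erase i, A i x) + quadFU h H (X.erase i) +
          (((h j : WithTop ℝ) + ∑ y ∈ Y.erase j, A j y) + quadFU h H (Y.erase j)) := by abel

lemma tri_of_mnat (h : ι → ℝ) (H : ι → ι → WithTop ℝ) (hmn : MnatConvex (quadFU h H)) :
    Tri (fun u v => min (H u v) (H v u)) := by
  classical
  intro u v w huv huw hvw
  set A : ι → ι → WithTop ℝ := fun u v => min (H u v) (H v u) with hA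
  have hu : u ∈ ({u, v} : Finset ι) \ {w} := by
    exact Finset.mem_sdiff.mpr ⟨by simp, by simp [huw]⟩
  have e1 : ({u, v} : Finset ι).erase u = {v} := by
    rw [show ({u, v} : Finset ι) = insert u {v} from rfl,
      Finset.erase_insert (by simp [huv])]
  have quv : quadFU h H {u, v} = ((h u : WithTop ℝ) + A u v) + (h v : WithTop ℝ) := by
    rw [show ({u, v} : Finset ι) = insert u {v} from rfl,
      quadFU_insert h H (by simp [huv]), Finset.sum_singleton, quadFU_singleton]
  have qw : quadFU h H ({w} : Finset ι) = (h w : WithTop ℝ) := quadFU_singleton h H w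
  have qv : quadFU h H ({v} : Finset ι) = (h v : WithTop ℝ) := quadFU_singleton h H v
  rcases hmn {u, v} {w} u hu with hle | ⟨j, hj, hle⟩
  · rw [e1] at hle
    have quw : quadFU h H (insert u ({w} : Finset ι)) =
        ((h u : WithTop ℝ) + A u w) + (h w : WithTop ℝ) := by
      rw [quadFU_insert h H (by simp [huw]), Finset.sum_singleton, quadFU_singleton]
    rw [qv, quw, quv, qw] at hle
    have hc : ((h u + h v + h w : ℝ) : WithTop ℝ) + A u w ≤
        ((h u + h v + h w : ℝ) : WithTop ℝ) + A u v := by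
      calc ((h u + h v + h w : ℝ) : WithTop ℝ) + A u w
          = (h v : WithTop ℝ) + (((h u : WithTop ℝ) + A u w) + (h w : WithTop ℝ)) := by
            push_cast; abel
        _ ≤ (((h u : WithTop ℝ) + A u v) + (h v : WithTop ℝ)) + (h w : WithTop ℝ) := hle
        _ = ((h u + h v + h w : ℝ) : WithTop ℝ) + A u v := by push_cast; abel
    exact le_trans (min_le_left _ _) (cancel_left _ hc)
  · have hjw : j = w := by
      simpa using (Finset.mem_sdiff.mp hj).1
    subst hjw
    rw [e1] at hle
    have e2 : (insert u ({j} : Finset ι)).erase j = {u} := by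
      ext t
      simp only [Finset.mem_erase, Finset.mem_insert, Finset.mem_singleton]
      constructor
      · rintro ⟨htj, rfl | rfl⟩
        · rfl
        · exact absurd rfl htj
      · rintro rfl
        exact ⟨huw, Or.inl rfl⟩
    rw [e2] at hle
    have qwv : quadFU h H (insert j ({v} : Finset ι)) =
        ((h j : WithTop ℝ) + A j v) + (h v : WithTop ℝ) := by
      rw [quadFU_insert h H (by simp [Ne.symm hvw]), Finset.sum_singleton, quadFU_singleton]
    have qu : quadFU h H ({u} : Finset ι) = (h u : WithTop ℝ) := quadFU_singleton h H u
    rw [qwv, qu, quv, qw] at hle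
    have hc : ((h u + h v + h j : ℝ) : WithTop ℝ) + A j v ≤
        ((h u + h v + h j : ℝ) : WithTop ℝ) + A u v := by
      calc ((h u + h v + h j : ℝ) : WithTop ℝ) + A j v
          = (((h j : WithTop ℝ) + A j v) + (h v : WithTop ℝ)) + (h u : WithTop ℝ) := by
            push_cast; abel
        _ ≤ (((h u : WithTop ℝ) + A u v) + (h v : WithTop ℝ)) + (h j : WithTop ℝ) := hle
        _ = ((h u + h v + h j : ℝ) : WithTop ℝ) + A u v := by push_cast; abel
    have h6 : A j v ≤ A u v := cancel_left _ hc
    have h5 : A v j = A j v := min_comm _ _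
    exact le_trans (min_le_right _ _) (by rw [h5]; exact h6)

lemma not_minTwice_strict {a b c d : WithTop ℝ} (h1 : a < b) (h2 : a < c) (h3 : a < d) :
    ¬ MinTwice ![a, b, c, d] := by
  rintro ⟨p, q, hpq, hmin, heq⟩
  have hp0 : p = 0 := by
    by_contra hp
    have hle := hmin 0
    fin_cases p
    · exact hp rfl
    · exact absurd hle (not_le.mpr h1)
    · exact absurd hle (not_le.mpr h2)
    · exact absurd hle (not_le.mpr h3)
  subst hp0
  fin_cases q
  · exact hpq rfl
  · exact absurd heq (ne_of_lt h1)
  · exact absurd heq (ne_of_lt h2)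
  · exact absurd heq (ne_of_lt h3)

lemma minTwice_of_tri {δ a b c d : WithTop ℝ}
    (h1 : min a b ≤ δ) (h2 : min δ b ≤ a) (h3 : min δ a ≤ b)
    (h4 : min c d ≤ δ) (h5 : min δ d ≤ c) (h6 : min δ c ≤ d) :
    MinTwice ![a, c, b, d] := by
  have v0 : (![a, c, b, d] : Fin 4 → WithTop ℝ) 0 = a := rfl
  have v1 : (![a, c, b, d] : Fin 4 → WithTop ℝ) 1 = c := rfl
  have v2 : (![a, c, b, d] : Fin 4 → WithTop ℝ) 2 = b := rfl
  have v3 : (![a, c, b, d] : Fin 4 → WithTop ℝ) 3 = d := rfl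
  -- helper : if pair (a,b) has distinct values then δ ≤ min a b
  have keyab : a ≠ b → δ = min a b := by
    intro hab
    refine le_antisymm ?_ h1
    rcases lt_or_gt_of_ne hab with hl | hl
    · rcases min_le_iff.mp h2 with h | h
      · exact le_min h (le_trans h hl.le)
      · exact absurd h (not_le.mpr hl)
    · rcases min_le_iff.mp h3 with h | h
      · exact le_min (le_trans h hl.le) h
      · exact absurd h (not_le.mpr hl)
  have keycd : c ≠ d → δ = min c d := by
    intro hcd
    refine le_antisymm ?_ h4
    rcases lt_or_gt_of_ne hcd with hl | hl
    · rcases min_le_iff.mp h5 with h | h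
      · exact le_min h (le_trans h hl.le)
      · exact absurd h (not_le.mpr hl)
    · rcases min_le_iff.mp h6 with h | h
      · exact le_min (le_trans h hl.le) h
      · exact absurd h (not_le.mpr hl)
  by_cases hab : a = b
  · by_cases hm : min a b ≤ min c d
    · refine ⟨0, 2, by decide, ?_, hab⟩
      intro t
      have ha : a ≤ min c d := by
        rw [← hab, min_self] at hm
        exact hm
      fin_cases t
      · exact le_rfl
      · exact ha.trans (min_le_left _ _)
      · exact hab.le
      · exact ha.trans (min_le_right _ _)
    · push_neg at hm
      have hcd : c = d := by
        by_contra hcd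
        have := keycd hcd
        exact absurd (le_trans h1 this.le) (not_le.mpr hm)
      refine ⟨1, 3, by decide, ?_, hcd⟩
      intro t
      have hc : c ≤ min a b := by
        rw [← hcd, min_self] at hm
        exact hm.le
      fin_cases t
      · exact hc.trans (min_le_left _ _)
      · exact le_rfl
      · exact hc.trans (min_le_right _ _)
      · exact hcd.le
  · have hd1 := keyab hab
    by_cases hcd : c = d
    · have hm : min c d ≤ min a b := le_trans h4 (le_of_eq hd1)
      refine ⟨1, 3, by decide, ?_, hcd⟩
      intro t
      have hc : c ≤ min a b := by
        rw [← hcd, min_self] at hm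
        exact hm
      fin_cases t
      · exact hc.trans (min_le_left _ _)
      · exact le_rfl
      · exact hc.trans (min_le_right _ _)
      · exact hcd.le
    · have hd2 := keycd hcd
      have hmm : min a b = min c d := by rw [← hd1, ← hd2]
      rcases le_total a b with hl | hl
      · have hma : a = min a b := (min_eq_left hl).symm
        rcases le_total c d with hk | hk
        · refine ⟨0, 1, by decide, ?_, ?_⟩
          · intro t
            fin_cases t
            · exact le_rfl
            · exact hma.le.trans (hmm.le.trans (min_le_left _ _))
            · exact hl
            · exact hma.le.trans (hmm.le.trans (min_le_right _ _))
          · show a = c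
            rw [hma, hmm, min_eq_left hk]
        · refine ⟨0, 3, by decide, ?_, ?_⟩
          · intro t
            fin_cases t
            · exact le_rfl
            · exact hma.le.trans (hmm.le.trans (min_le_left _ _))
            · exact hl
            · exact hma.le.trans (hmm.le.trans (min_le_right _ _))
          · show a = d
            rw [hma, hmm, min_eq_right hk]
      · have hmb : b = min a b := (min_eq_right hl).symm
        rcases le_total c d with hk | hk
        · refine ⟨2, 1, by decide, ?_, ?_⟩
          · intro t
            fin_cases t
            · exact hl
            · exact hmb.le.trans (hmm.le.trans (min_le_left _ _))
            · exact le_rfl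
            · exact hmb.le.trans (hmm.le.trans (min_le_right _ _))
          · show b = c
            rw [hmb, hmm, min_eq_left hk]
        · refine ⟨2, 3, by decide, ?_, ?_⟩
          · intro t
            fin_cases t
            · exact hl
            · exact hmb.le.trans (hmm.le.trans (min_le_left _ _))
            · exact le_rfl
            · exact hmb.le.trans (hmm.le.trans (min_le_right _ _))
          · show b = d
            rw [hmb, hmm, min_eq_right hk]

section Completion

variable {r : ℕ} {d : Fin r → ℕ}
  (cb : ∀ i j : Fin r, Fin (d i) → Fin (d j) → WithTop ℝ)

noncomputable def DDf (u v : (i : Fin r) × Fin (d i)) : WithTop ℝ :=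
  if hne : ((Finset.univ : Finset ((i : Fin r) × Fin (d i))).filter
      (fun t => t.1 ≠ u.1)).Nonempty
  then (Finset.univ.filter (fun t : (i : Fin r) × Fin (d i) => t.1 ≠ u.1)).sup' hne
    (fun t : (i : Fin r) × Fin (d i) => min (cb u.1 t.1 u.2 t.2) (cb v.1 t.1 v.2 t.2))
  else 0

noncomputable def Hcf (u v : (i : Fin r) × Fin (d i)) : WithTop ℝ :=
  if u.1 = v.1 then DDf cb u v else cb u.1 v.1 u.2 v.2

lemma le_DDf (u v t : (i : Fin r) × Fin (d i)) (ht : t.1 ≠ u.1) :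
    min (cb u.1 t.1 u.2 t.2) (cb v.1 t.1 v.2 t.2) ≤ DDf cb u v := by
  have hmem : t ∈ (Finset.univ : Finset ((i : Fin r) × Fin (d i))).filter
      (fun s => s.1 ≠ u.1) := Finset.mem_filter.mpr ⟨Finset.mem_univ _, ht⟩
  have hne : ((Finset.univ : Finset ((i : Fin r) × Fin (d i))).filter
      (fun s => s.1 ≠ u.1)).Nonempty := ⟨t, hmem⟩
  simp only [DDf]
  rw [dif_pos hne]
  exact Finset.le_sup' (fun t => min (cb u.1 t.1 u.2 t.2) (cb v.1 t.1 v.2 t.2)) hmem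

lemma DDf_lt (u v : (i : Fin r) × Fin (d i)) (c : WithTop ℝ) (hlt : c < DDf cb u v)
    (t0 : (i : Fin r) × Fin (d i)) (ht0 : t0.1 ≠ u.1) :
    ∃ t : (i : Fin r) × Fin (d i), t.1 ≠ u.1 ∧
      c < min (cb u.1 t.1 u.2 t.2) (cb v.1 t.1 v.2 t.2) := by
  have hne : ((Finset.univ : Finset ((i : Fin r) × Fin (d i))).filter
      (fun s => s.1 ≠ u.1)).Nonempty :=
    ⟨t0, Finset.mem_filter.mpr ⟨Finset.mem_univ _, ht0⟩⟩
  simp only [DDf] at hlt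
  rw [dif_pos hne] at hlt
  rw [Finset.lt_sup'_iff] at hlt
  obtain ⟨t, ht, h⟩ := hlt
  exact ⟨t, (Finset.mem_filter.mp ht).2, h⟩

lemma DDf_nonneg (hcb0 : ∀ i j a b, 0 ≤ cb i j a b) (u v : (i : Fin r) × Fin (d i)) :
    0 ≤ DDf cb u v := by
  simp only [DDf]
  split_ifs with hne
  · obtain ⟨t, ht⟩ := hne
    exact le_trans (le_min (hcb0 _ _ _ _) (hcb0 _ _ _ _))
      (Finset.le_sup' (fun t => min (cb u.1 t.1 u.2 t.2) (cb v.1 t.1 v.2 t.2)) ht)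
  · exact le_rfl

lemma Hcf_symm (hcbs : ∀ i j a b, cb i j a b = cb j i b a) (u v : (i : Fin r) × Fin (d i)) :
    Hcf cb u v = Hcf cb v u := by
  simp only [Hcf]
  by_cases h : u.1 = v.1
  · rw [if_pos h, if_pos h.symm]
    simp only [DDf]
    have hset : ((Finset.univ : Finset ((i : Fin r) × Fin (d i))).filter
        (fun t => t.1 ≠ u.1)) = Finset.univ.filter (fun t => t.1 ≠ v.1) := by
      simp only [h]
    by_cases h1 : ((Finset.univ : Finset ((i : Fin r) × Fin (d i))).filter
        (fun t => t.1 ≠ u.1)).Nonempty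
    · have h2 : ((Finset.univ : Finset ((i : Fin r) × Fin (d i))).filter
          (fun t => t.1 ≠ v.1)).Nonempty := hset ▸ h1
      rw [dif_pos h1, dif_pos h2]
      exact Finset.sup'_congr h1 hset (fun t ht => min_comm _ _)
    · have h2 : ¬ ((Finset.univ : Finset ((i : Fin r) × Fin (d i))).filter
          (fun t => t.1 ≠ v.1)).Nonempty := hset ▸ h1
      rw [dif_neg h1, dif_neg h2]
  · rw [if_neg h, if_neg (fun e => h e.symm)]
    exact hcbs _ _ _ _

lemma Hcf_nonneg (hcb0 : ∀ i j a b, 0 ≤ cb i j a b) (u v : (i : Fin r) × Fin (d i)) :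
    0 ≤ Hcf cb u v := by
  simp only [Hcf]
  split_ifs with h
  · exact DDf_nonneg cb hcb0 u v
  · exact hcb0 _ _ _ _

lemma tri_completion (hcbs : ∀ i j a b, cb i j a b = cb j i b a)
    (hjwp : JWP r d cb) (hzf : ZFree r d cb) :
    Tri (fun u v => min (Hcf cb u v) (Hcf cb v u)) := by
  have hred : ∀ u v : (i : Fin r) × Fin (d i),
      min (Hcf cb u v) (Hcf cb v u) = Hcf cb u v := by
    intro u v
    rw [← Hcf_symm cb hcbs u v, min_self]
  intro u v w huv huw hvw
  simp only [hred]
  obtain ⟨ui, ua⟩ := u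
  obtain ⟨vi, va⟩ := v
  obtain ⟨wi, wa⟩ := w
  by_cases e1 : ui = vi
  · subst e1
    have hab : ua ≠ va := fun h => huv (by rw [h])
    by_cases e2 : ui = wi
    · subst e2
      -- all three in the same block
      have hbc : va ≠ wa := fun h => hvw (by rw [h])
      have hH : ∀ a b : Fin (d ui), Hcf cb ⟨ui, a⟩ ⟨ui, b⟩ = DDf cb ⟨ui, a⟩ ⟨ui, b⟩ := by
        intro a b
        rw [Hcf, if_pos rfl]
      rw [hH, hH, hH]
      by_cases hne : ((Finset.univ : Finset ((i : Fin r) × Fin (d i))).filter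
          (fun t => t.1 ≠ ui)).Nonempty
      · by_contra hcon
        push_neg at hcon
        set K := DDf cb ⟨ui, ua⟩ ⟨ui, va⟩ with hK
        obtain ⟨t0, ht0⟩ := hne
        have hw0 : t0.1 ≠ ui := (Finset.mem_filter.mp ht0).2
        obtain ⟨s, hs1, hs2⟩ := DDf_lt cb ⟨ui, ua⟩ ⟨ui, wa⟩ K
          (lt_of_lt_of_le hcon (min_le_left _ _)) t0 hw0
        obtain ⟨t, ht1, ht2⟩ := DDf_lt cb ⟨ui, va⟩ ⟨ui, wa⟩ K
          (lt_of_lt_of_le hcon (min_le_right _ _)) t0 hw0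
        obtain ⟨si, sa⟩ := s
        obtain ⟨ti, ta⟩ := t
        simp only [lt_min_iff] at hs2 ht2
        obtain ⟨hsA, hsW⟩ := hs2
        obtain ⟨htB, htW⟩ := ht2
        have gs : min (cb ui si ua sa) (cb ui si va sa) ≤ K :=
          le_DDf cb ⟨ui, ua⟩ ⟨ui, va⟩ ⟨si, sa⟩ hs1
        have gt : min (cb ui ti ua ta) (cb ui ti va ta) ≤ K :=
          le_DDf cb ⟨ui, ua⟩ ⟨ui, va⟩ ⟨ti, ta⟩ ht1
        have gs' : cb ui si va sa ≤ K := by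
          rcases min_le_iff.mp gs with h | h
          · exact absurd h (not_le.mpr hsA)
          · exact h
        have gt' : cb ui ti ua ta ≤ K := by
          rcases min_le_iff.mp gt with h | h
          · exact h
          · exact absurd h (not_le.mpr htB)
        by_cases est : si = ti
        · subst est
          by_cases esa : sa = ta
          · subst esa
            exact absurd htB (not_lt.mpr gs')
          · have hmt := hzf ui si (fun h => hs1 h.symm) va wa hbc sa ta esa
            exact not_minTwice_strict (lt_of_le_of_lt gs' htB)
              (lt_of_le_of_lt gs' hsW) (lt_of_le_of_lt gs' htW) hmt
        · -- si ≠ ti, both ≠ ui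
          have j1 : min (cb si ti sa ta) (cb ui ti va ta) ≤ cb ui si va sa :=
            hjwp ui si ti (fun h => hs1 h.symm) est (fun h => ht1 h.symm) va sa ta
          have j1' : cb si ti sa ta ≤ K := by
            rcases min_le_iff.mp j1 with h | h
            · exact h.trans gs'
            · exact absurd (h.trans gs') (not_le.mpr htB)
          have j2 : min (cb ti ui ta wa) (cb si ui sa wa) ≤ cb si ti sa ta :=
            hjwp si ti ui est ht1 hs1 sa ta wa
          have hlt2 : K < min (cb ti ui ta wa) (cb si ui sa wa) := by
            refine lt_min ?_ ?_
            · rw [hcbs ti ui ta wa]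
              exact htW
            · rw [hcbs si ui sa wa]
              exact hsW
          exact absurd (lt_of_lt_of_le hlt2 (j2.trans j1')) (lt_irrefl _)
      · -- no other blocks : all DDf are 0
        have hz : ∀ a b : Fin (d ui), DDf cb ⟨ui, a⟩ ⟨ui, b⟩ = 0 := by
          intro a b
          simp only [DDf]
          rw [dif_neg hne]
        rw [hz, hz, hz, min_self]
    · -- ui = vi, w in another block
      have hH1 : Hcf cb ⟨ui, ua⟩ ⟨wi, wa⟩ = cb ui wi ua wa := by rw [Hcf, if_neg e2]
      have hH2 : Hcf cb ⟨ui, va⟩ ⟨wi, wa⟩ = cb ui wi va wa := by rw [Hcf, if_neg e2]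
      have hH3 : Hcf cb ⟨ui, ua⟩ ⟨ui, va⟩ = DDf cb ⟨ui, ua⟩ ⟨ui, va⟩ := by
        rw [Hcf, if_pos rfl]
      rw [hH1, hH2, hH3]
      exact le_DDf cb ⟨ui, ua⟩ ⟨ui, va⟩ ⟨wi, wa⟩ (fun h => e2 h.symm)
  · -- ui ≠ vi
    have hH0 : Hcf cb ⟨ui, ua⟩ ⟨vi, va⟩ = cb ui vi ua va := by rw [Hcf, if_neg e1]
    by_cases e2 : vi = wi
    · subst e2
      have hbc : va ≠ wa := fun h => hvw (by rw [h])
      have hH1 : Hcf cb ⟨ui, ua⟩ ⟨vi, wa⟩ = cb ui vi ua wa := by rw [Hcf, if_neg e1]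
      have hH2 : Hcf cb ⟨vi, va⟩ ⟨vi, wa⟩ = DDf cb ⟨vi, va⟩ ⟨vi, wa⟩ := by
        rw [Hcf, if_pos rfl]
      rw [hH0, hH1, hH2]
      by_contra hcon
      push_neg at hcon
      rw [lt_min_iff] at hcon
      obtain ⟨hW, hD⟩ := hcon
      obtain ⟨t, ht1, ht2⟩ := DDf_lt cb ⟨vi, va⟩ ⟨vi, wa⟩ _ hD ⟨ui, ua⟩ e1
      obtain ⟨ti, ta⟩ := t
      rw [lt_min_iff] at ht2
      obtain ⟨htA, htW⟩ := ht2
      by_cases eti : ti = ui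
      · subst eti
        by_cases eta : ta = ua
        · rw [eta] at htA
          rw [hcbs vi ti va ua] at htA
          exact lt_irrefl _ htA
        · have hmt := hzf vi ti (fun h => e1 h.symm) va wa hbc ua ta (fun h => eta h.symm)
          refine not_minTwice_strict ?_ ?_ ?_ hmt
          · rw [hcbs vi ti va ua]
            exact htA
          · rw [hcbs vi ti va ua, hcbs vi ti wa ua]
            exact hW
          · rw [hcbs vi ti va ua]
            exact htW
      · have j1 : min (cb vi ti va ta) (cb ui ti ua ta) ≤ cb ui vi ua va :=
          hjwp ui vi ti e1 (fun h => ht1 h.symm) (fun h => eti h.symm) ua va ta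
        have j1' : cb ui ti ua ta ≤ cb ui vi ua va := by
          rcases min_le_iff.mp j1 with h | h
          · exact absurd h (not_le.mpr htA)
          · exact h
        have j2 : min (cb ti vi ta wa) (cb ui vi ua wa) ≤ cb ui ti ua ta :=
          hjwp ui ti vi (fun h => eti h.symm) ht1 e1 ua ta wa
        have hlt2 : cb ui vi ua va < min (cb ti vi ta wa) (cb ui vi ua wa) := by
          refine lt_min ?_ hW
          rw [hcbs ti vi ta wa]
          exact htW
        exact absurd (lt_of_lt_of_le hlt2 (j2.trans j1')) (lt_irrefl _)
    · by_cases e3 : ui = wi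
      · subst e3
        have hac : ua ≠ wa := fun h => huw (by rw [h])
        have hH1 : Hcf cb ⟨ui, ua⟩ ⟨ui, wa⟩ = DDf cb ⟨ui, ua⟩ ⟨ui, wa⟩ := by
          rw [Hcf, if_pos rfl]
        have hH2 : Hcf cb ⟨vi, va⟩ ⟨ui, wa⟩ = cb vi ui va wa := by
          rw [Hcf, if_neg (fun h => e1 h.symm)]
        rw [hH0, hH1, hH2]
        by_contra hcon
        push_neg at hcon
        rw [lt_min_iff] at hcon
        obtain ⟨hD, hV⟩ := hcon
        obtain ⟨t, ht1, ht2⟩ := DDf_lt cb ⟨ui, ua⟩ ⟨ui, wa⟩ _ hD ⟨vi, va⟩ (fun h => e1 h.symm)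
        obtain ⟨ti, ta⟩ := t
        rw [lt_min_iff] at ht2
        obtain ⟨htA, htW⟩ := ht2
        by_cases eti : ti = vi
        · subst eti
          by_cases eta : ta = va
          · rw [eta] at htA
            exact lt_irrefl _ htA
          · have hmt := hzf ui ti e1 ua wa hac va ta (fun h => eta h.symm)
            refine not_minTwice_strict htA ?_ htW hmt
            rw [hcbs ui ti wa va]
            exact hV
        · have j1 : min (cb vi ti va ta) (cb ui ti ua ta) ≤ cb ui vi ua va :=
            hjwp ui vi ti e1 (fun h => eti h.symm) (fun h => ht1 h.symm) ua va ta
          have j1' : cb vi ti va ta ≤ cb ui vi ua va := by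
            rcases min_le_iff.mp j1 with h | h
            · exact h
            · exact absurd h (not_le.mpr htA)
          have j2 : min (cb ti ui ta wa) (cb vi ui va wa) ≤ cb vi ti va ta :=
            hjwp vi ti ui (fun h => eti h.symm) ht1 (fun h => e1 h.symm) va ta wa
          have hlt2 : cb ui vi ua va < min (cb ti ui ta wa) (cb vi ui va wa) := by
            refine lt_min ?_ hV
            rw [hcbs ti ui ta wa]
            exact htW
          exact absurd (lt_of_lt_of_le hlt2 (j2.trans j1')) (lt_irrefl _)
      · have hH1 : Hcf cb ⟨ui, ua⟩ ⟨wi, wa⟩ = cb ui wi ua wa := by rw [Hcf, if_neg e3]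
        have hH2 : Hcf cb ⟨vi, va⟩ ⟨wi, wa⟩ = cb vi wi va wa := by rw [Hcf, if_neg e2]
        rw [hH0, hH1, hH2, min_comm]
        exact hjwp ui vi wi e1 e2 e3 ua va wa

end Completion

/-- For `f(x) = Σ_i c_i(x_i) + Σ_{i<j} c_{ij}(x_i,x_j)` with nonnegative costs, the partial
matrix `H` over `U = {(i,a) : i ∈ [r], a ∈ D_i}` given by `h_{(i,a),(j,b)} = c_{ij}(a,b)`
for `i ≠ j` (and undefined for `i = j`) is M♮-convex completable iff `f` satisfies the joint
winner property and is Z-free. -/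
theorem stmt2 (r : ℕ) (d : Fin r → ℕ) (hd : ∀ i, 2 ≤ d i)
    (cu : ∀ i : Fin r, Fin (d i) → ℝ) (hcu : ∀ i a, 0 ≤ cu i a)
    (cb : ∀ i j : Fin r, Fin (d i) → Fin (d j) → WithTop ℝ)
    (hcb0 : ∀ i j a b, 0 ≤ cb i j a b)
    (hcbs : ∀ i j a b, cb i j a b = cb j i b a) :
    (∃ H' : ((i : Fin r) × Fin (d i)) → ((i : Fin r) × Fin (d i)) → WithTop ℝ,
      (∀ u v, H' u v = H' v u) ∧
      (∀ u v : (i : Fin r) × Fin (d i), u.1 ≠ v.1 → H' u v = cb u.1 v.1 u.2 v.2) ∧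
      (∃ h : ((i : Fin r) × Fin (d i)) → ℝ, MnatConvex (quadFU h H'))) ↔
    (JWP r d cb ∧ ZFree r d cb) := by
  constructor
  · rintro ⟨H', hs, hag, h, hmn⟩
    have htri := tri_of_mnat h H' hmn
    have hA : ∀ u v : (i : Fin r) × Fin (d i), min (H' u v) (H' v u) = H' u v := by
      intro u v
      rw [← hs u v, min_self]
    have hmk : ∀ (i : Fin r) (a b : Fin (d i)),
        (⟨i, a⟩ : (i : Fin r) × Fin (d i)) = ⟨i, b⟩ → a = b := by
      intro i a b hh
      simpa using hh
    constructor
    · intro i j k hij hjk hik a b c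
      have h1 := htri ⟨i, a⟩ ⟨j, b⟩ ⟨k, c⟩
        (fun hh => hij (congrArg Sigma.fst hh)) (fun hh => hik (congrArg Sigma.fst hh))
        (fun hh => hjk (congrArg Sigma.fst hh))
      simp only [hA] at h1
      rw [hag ⟨i, a⟩ ⟨k, c⟩ hik, hag ⟨j, b⟩ ⟨k, c⟩ hjk, hag ⟨i, a⟩ ⟨j, b⟩ hij] at h1
      rw [min_comm] at h1
      exact h1
    · intro i j hij a b hab c e hce
      have dab : (⟨i, a⟩ : (i : Fin r) × Fin (d i)) ≠ ⟨i, b⟩ :=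
        fun hh => hab (hmk _ _ _ hh)
      have dce : (⟨j, c⟩ : (i : Fin r) × Fin (d i)) ≠ ⟨j, e⟩ :=
        fun hh => hce (hmk _ _ _ hh)
      have dac : (⟨i, a⟩ : (i : Fin r) × Fin (d i)) ≠ ⟨j, c⟩ :=
        fun hh => hij (congrArg Sigma.fst hh)
      have dae : (⟨i, a⟩ : (i : Fin r) × Fin (d i)) ≠ ⟨j, e⟩ :=
        fun hh => hij (congrArg Sigma.fst hh)
      have dbc : (⟨i, b⟩ : (i : Fin r) × Fin (d i)) ≠ ⟨j, c⟩ :=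
        fun hh => hij (congrArg Sigma.fst hh)
      have dbe : (⟨i, b⟩ : (i : Fin r) × Fin (d i)) ≠ ⟨j, e⟩ :=
        fun hh => hij (congrArg Sigma.fst hh)
      have T1 := htri ⟨i, a⟩ ⟨i, b⟩ ⟨j, c⟩ dab dac dbc
      have T2 := htri ⟨i, a⟩ ⟨j, c⟩ ⟨i, b⟩ dac dab (fun hh => dbc hh.symm)
      have T3 := htri ⟨i, b⟩ ⟨j, c⟩ ⟨i, a⟩ dbc (fun hh => dab hh.symm) (fun hh => dac hh.symm)
      have T4 := htri ⟨i, a⟩ ⟨i, b⟩ ⟨j, e⟩ dab dae dbe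
      have T5 := htri ⟨i, a⟩ ⟨j, e⟩ ⟨i, b⟩ dae dab (fun hh => dbe hh.symm)
      have T6 := htri ⟨i, b⟩ ⟨j, e⟩ ⟨i, a⟩ dbe (fun hh => dab hh.symm) (fun hh => dae hh.symm)
      simp only [hA] at T1 T2 T3 T4 T5 T6
      rw [hag ⟨i, a⟩ ⟨j, c⟩ hij, hag ⟨i, b⟩ ⟨j, c⟩ hij] at T1
      rw [hag ⟨j, c⟩ ⟨i, b⟩ (fun hh => hij hh.symm), hcbs j i c b,
        hag ⟨i, a⟩ ⟨j, c⟩ hij] at T2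
      rw [hs ⟨i, b⟩ ⟨i, a⟩, hag ⟨j, c⟩ ⟨i, a⟩ (fun hh => hij hh.symm), hcbs j i c a,
        hag ⟨i, b⟩ ⟨j, c⟩ hij] at T3
      rw [hag ⟨i, a⟩ ⟨j, e⟩ hij, hag ⟨i, b⟩ ⟨j, e⟩ hij] at T4
      rw [hag ⟨j, e⟩ ⟨i, b⟩ (fun hh => hij hh.symm), hcbs j i e b,
        hag ⟨i, a⟩ ⟨j, e⟩ hij] at T5
      rw [hs ⟨i, b⟩ ⟨i, a⟩, hag ⟨j, e⟩ ⟨i, a⟩ (fun hh => hij hh.symm), hcbs j i e a,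
        hag ⟨i, b⟩ ⟨j, e⟩ hij] at T6
      exact minTwice_of_tri T1 T2 T3 T4 T5 T6
  · rintro ⟨hjwp, hzf⟩
    refine ⟨Hcf cb, Hcf_symm cb hcbs, ?_, (fun _ => 0), ?_⟩
    · intro u v hh
      rw [Hcf, if_neg hh]
    · exact mnat_of_tri _ _ (tri_completion cb hcbs hjwp hzf)
        (fun u v => le_min (Hcf_nonneg cb hcb0 u v) (Hcf_nonneg cb hcb0 v u))
end
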